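/- arXiv:1412.3680 — 4 statements merged into one kernel-verified Lean document; each statement's English description precedes it below -/
import Mathlib

section
/- Let p0, p1 be probability vectors on a finite set X and let σ0, σ1 be n×n density matrices. A classical-to-quantum channel Γ with Γ(p0) = σ0 and Γ(p1) = σ1 exists if and only if D_f(p0‖p1) ≥ D_f^max(σ0‖σ1) holds for every convex continuous function f : [0,∞) → ℝ. -/
open Matrix
open scoped Kronecker ComplexOrder

noncomputable section

/-- A probability vector on a finite set. -/
def ProbVec {X : Type*} [Fintype X] (p : X → ℝ) : Prop :=
  (∀ x, 0 ≤ p x) ∧ ∑ x, p x = 1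

/-- A density matrix: positive semidefinite with trace one. -/
def IsDensityMatrix {n : ℕ} (ρ : Matrix (Fin n) (Fin n) ℂ) : Prop :=
  ρ.PosSemidef ∧ ρ.trace = 1

/-- The action of a classical-to-quantum channel, given by a family of density
matrices `ρ`, on a probability vector `p`. -/
def cqApply {X : Type*} [Fintype X] {n : ℕ} (ρ : X → Matrix (Fin n) (Fin n) ℂ)
    (p : X → ℝ) : Matrix (Fin n) (Fin n) ℂ :=
  ∑ x, (p x : ℂ) • ρ x

/-- The recession slope `lim_{λ → ∞} f(λ)/λ`, as an extended real number.
(For convex continuous `f` the limit exists and equals this limsup.) -/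
def recessionSlope (f : ℝ → ℝ) : EReal :=
  Filter.limsup (fun lam : ℝ => ((f lam / lam : ℝ) : EReal)) Filter.atTop

/-- The `f`-divergence of two probability vectors, valued in `ℝ ∪ {+∞}`
(with the convention `0 * ∞ = 0`, which holds for `EReal` multiplication). -/
def fDiv {X : Type*} [Fintype X] (f : ℝ → ℝ) (p0 p1 : X → ℝ) : EReal :=
  ((∑ x, if 0 < p1 x then p1 x * f (p0 x / p1 x) else 0 : ℝ) : EReal)
    + ((∑ x, if 0 < p1 x then 0 else p0 x : ℝ) : EReal) * recessionSlope f

/-- The maximal `f`-divergence: the infimum of `D_f(q0‖q1)` over all classical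
families mapped onto `(σ0, σ1)` by some classical-to-quantum channel. -/
def DfMax {n : ℕ} (f : ℝ → ℝ) (σ0 σ1 : Matrix (Fin n) (Fin n) ℂ) : EReal :=
  sInf { d : EReal |
    ∃ (m : ℕ) (q0 q1 : Fin m → ℝ) (ρ : Fin m → Matrix (Fin n) (Fin n) ℂ),
      ProbVec q0 ∧ ProbVec q1 ∧ (∀ x, IsDensityMatrix (ρ x)) ∧
      cqApply ρ q0 = σ0 ∧ cqApply ρ q1 = σ1 ∧ d = fDiv f q0 q1 }

/-- Spectral functional calculus for Hermitian matrices (junk value `0` on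
non-Hermitian input). -/
def hermCFC {n : ℕ} (f : ℝ → ℝ) (A : Matrix (Fin n) (Fin n) ℂ) :
    Matrix (Fin n) (Fin n) ℂ :=
  if hA : A.IsHermitian then
    (hA.eigenvectorUnitary : Matrix (Fin n) (Fin n) ℂ) *
      Matrix.diagonal (fun i => (f (hA.eigenvalues i) : ℂ)) *
      (star (hA.eigenvectorUnitary : Matrix (Fin n) (Fin n) ℂ))
  else 0

/-- Spectral pseudo-inverse: invert the nonzero eigenvalues. -/
def pinvMat {n : ℕ} (A : Matrix (Fin n) (Fin n) ℂ) : Matrix (Fin n) (Fin n) ℂ :=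
  hermCFC (fun x => if x = 0 then 0 else x⁻¹) A

/-- Orthogonal projection onto the range of a Hermitian matrix
(spectral projection onto the nonzero eigenvalues). -/
def rangeProj {n : ℕ} (A : Matrix (Fin n) (Fin n) ℂ) : Matrix (Fin n) (Fin n) ℂ :=
  hermCFC (fun x => if x = 0 then 0 else 1) A

/-- `A ↦ (A⁺)^{1/2}`, the square root of the spectral pseudo-inverse. -/
def invSqrtMat {n : ℕ} (A : Matrix (Fin n) (Fin n) ℂ) : Matrix (Fin n) (Fin n) ℂ :=
  hermCFC (fun x => if x = 0 then 0 else (Real.sqrt x)⁻¹) A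

/-- Generalized Schur complement of `σ0` with respect to a projection `π`:
`π σ0 π − π σ0 (1−π) · ((1−π) σ0 (1−π))⁺ · (1−π) σ0 π`. -/
def schurCompl {n : ℕ} (σ0 π : Matrix (Fin n) (Fin n) ℂ) :
    Matrix (Fin n) (Fin n) ℂ :=
  π * σ0 * π -
    (π * σ0 * (1 - π)) * pinvMat ((1 - π) * σ0 * (1 - π)) * ((1 - π) * σ0 * π)

/-- `σ̃0`: the generalized Schur complement of `σ0` with respect to the
projection onto the range of `σ1`. -/
def sigmaTilde {n : ℕ} (σ0 σ1 : Matrix (Fin n) (Fin n) ℂ) :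
    Matrix (Fin n) (Fin n) ℂ :=
  schurCompl σ0 (rangeProj σ1)

/-- The closed-form expression
`F_f(σ0,σ1) = tr σ1 f(σ1^{-1/2} σ̃0 σ1^{-1/2}) + (1 − tr σ̃0) L(f)`. -/
def Ff {n : ℕ} (f : ℝ → ℝ) (σ0 σ1 : Matrix (Fin n) (Fin n) ℂ) : EReal :=
  (((σ1 * hermCFC f (invSqrtMat σ1 * sigmaTilde σ0 σ1 * invSqrtMat σ1)).trace.re : ℝ) : EReal)
    + ((1 - (sigmaTilde σ0 σ1).trace.re : ℝ) : EReal) * recessionSlope f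

/-- Operator convexity of a function on `[0,∞)`, via the spectral functional
calculus on positive semidefinite complex matrices. -/
def OperatorConvex (f : ℝ → ℝ) : Prop :=
  ∀ (n : ℕ) (A B : Matrix (Fin n) (Fin n) ℂ), A.PosSemidef → B.PosSemidef →
    ∀ t : ℝ, 0 ≤ t → t ≤ 1 →
      (t • hermCFC f A + (1 - t) • hermCFC f B
        - hermCFC f (t • A + (1 - t) • B)).PosSemidef

/-- A CPTP map between matrix algebras: trace preserving and with positive
semidefinite Choi matrix. -/
def IsCPTP {n k : ℕ}
    (Λ : Matrix (Fin n) (Fin n) ℂ →ₗ[ℂ] Matrix (Fin k) (Fin k) ℂ) : Prop :=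
  (∀ A, (Λ A).trace = A.trace) ∧
    (∑ i : Fin n, ∑ j : Fin n,
      (Λ (Matrix.single i j 1)) ⊗ₖ (Matrix.single i j (1 : ℂ))).PosSemidef

/-- The largest eigenvalue of a Hermitian matrix (junk value `0` otherwise). -/
def lmax {k : ℕ} (W : Matrix (Fin k) (Fin k) ℂ) : ℝ :=
  if h : W.IsHermitian then ⨆ i, h.eigenvalues i else 0

/-- A stochastic matrix (`P y x` is the probability of `y` given `x`). -/
def IsStochastic {X Y : Type*} [Fintype X] [Fintype Y] (P : Y → X → ℝ) : Prop :=
  (∀ y x, 0 ≤ P y x) ∧ ∀ x, ∑ y, P y x = 1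

/-- The action of a stochastic matrix on a probability vector. -/
def stocApply {X Y : Type*} [Fintype X] [Fintype Y] (P : Y → X → ℝ)
    (p : X → ℝ) : Y → ℝ :=
  fun y => ∑ x, P y x * p x

end

noncomputable section CQAuxSection

namespace CQAux

attribute [local instance] Matrix.normedAddCommGroup Matrix.normedSpace

variable {n : ℕ}

abbrev Mat (n : ℕ) := Matrix (Fin n) (Fin n) ℂ

def K (n : ℕ) : Set (Mat n) := {ρ | IsDensityMatrix ρ}

lemma isClosed_K : IsClosed (K n) := by
  have h1 : IsClosed {ρ : Mat n | ρ.IsHermitian} := by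
    have : {ρ : Mat n | ρ.IsHermitian} = {ρ : Mat n | ρᴴ = ρ} := rfl
    rw [this]
    exact isClosed_eq (continuous_id.matrix_conjTranspose) continuous_id
  have h2 : ∀ x : Fin n → ℂ, IsClosed {ρ : Mat n | 0 ≤ dotProduct (star x) (ρ *ᵥ x)} := by
    intro x
    have hc : Continuous fun ρ : Mat n => dotProduct (star x) (ρ *ᵥ x) :=
      continuous_const.dotProduct (continuous_id.matrix_mulVec continuous_const)
    have hs : IsClosed {z : ℂ | 0 ≤ z} := by
      have : {z : ℂ | 0 ≤ z} = Complex.re ⁻¹' Set.Ici 0 ∩ Complex.im ⁻¹' {0} := by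
        ext z
        simp only [Set.mem_setOf_eq, Complex.le_def, Set.mem_inter_iff, Set.mem_preimage,
          Set.mem_Ici, Set.mem_singleton_iff, Complex.zero_re, Complex.zero_im, eq_comm]
      rw [this]
      exact (isClosed_Ici.preimage Complex.continuous_re).inter
        (isClosed_singleton.preimage Complex.continuous_im)
    exact hs.preimage hc
  have h3 : IsClosed {ρ : Mat n | ρ.trace = 1} :=
    isClosed_eq (continuous_id.matrix_trace) continuous_const
  have : K n = ({ρ : Mat n | ρ.IsHermitian} ∩ ⋂ x, {ρ : Mat n | 0 ≤ dotProduct (star x) (ρ *ᵥ x)})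
      ∩ {ρ : Mat n | ρ.trace = 1} := by
    ext ρ
    simp only [K, IsDensityMatrix, posSemidef_iff_dotProduct_mulVec, Set.mem_setOf_eq, Set.mem_inter_iff,
      Set.mem_iInter, Set.mem_setOf_eq]
  rw [this]
  exact ((h1.inter (isClosed_iInter h2)).inter h3)

end CQAux

namespace CQAux
attribute [local instance] Matrix.normedAddCommGroup Matrix.normedSpace
variable {n : ℕ} {ρ : Mat n}

lemma diag_nonneg (hρ : ρ.PosSemidef) (i : Fin n) : 0 ≤ ρ i i := by
  have h := hρ.dotProduct_mulVec_nonneg (Pi.single i 1)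
  simpa [← Pi.single_star, Matrix.mulVec_single, single_dotProduct] using h

lemma diag_eq_re (hρ : ρ.PosSemidef) (i : Fin n) : ρ i i = ((ρ i i).re : ℂ) := by
  have h := diag_nonneg hρ i
  have him : (ρ i i).im = 0 := ((Complex.le_def.1 h).2).symm
  exact Complex.ext rfl (by simp [him])

lemma diag_re_nonneg (hρ : ρ.PosSemidef) (i : Fin n) : 0 ≤ (ρ i i).re :=
  (Complex.le_def.1 (diag_nonneg hρ i)).1

lemma diag_re_le_one (hρ : IsDensityMatrix ρ) (i : Fin n) : (ρ i i).re ≤ 1 := by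
  have htr : (∑ k, (ρ k k).re) = 1 := by
    have h1 := hρ.2
    rw [Matrix.trace] at h1
    have h2 := congrArg Complex.re h1
    simpa [Matrix.diag, Complex.re_sum] using h2
  calc (ρ i i).re ≤ ∑ k, (ρ k k).re :=
        Finset.single_le_sum (fun k _ => diag_re_nonneg hρ.1 k) (Finset.mem_univ i)
    _ = 1 := htr

lemma entry_abs_le_one (hρ : IsDensityMatrix ρ) (i j : Fin n) : ‖ρ i j‖ ≤ 1 := by
  rcases eq_or_ne i j with rfl | hij
  · rw [diag_eq_re hρ.1 i]
    simpa [Complex.norm_of_nonneg (diag_re_nonneg hρ.1 i), abs_of_nonneg (diag_re_nonneg hρ.1 i)] using diag_re_le_one hρ i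
  · have ha0 : 0 ≤ (ρ i i).re := diag_re_nonneg hρ.1 i
    have hb0 : 0 ≤ (ρ j j).re := diag_re_nonneg hρ.1 j
    have ha1 : (ρ i i).re ≤ 1 := diag_re_le_one hρ i
    have hb1 : (ρ j j).re ≤ 1 := diag_re_le_one hρ j
    have hii_im : (ρ i i).im = 0 := ((Complex.le_def.1 (diag_nonneg hρ.1 i)).2).symm
    have hjj_im : (ρ j j).im = 0 := ((Complex.le_def.1 (diag_nonneg hρ.1 j)).2).symm
    have hji : ρ j i = (starRingEnd ℂ) (ρ i j) := by
      rw [← hρ.1.1.apply i j]; exact (star_star _).symm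
    have hji_re : (ρ j i).re = (ρ i j).re := by rw [hji]; simp
    have hji_im : (ρ j i).im = -(ρ i j).im := by rw [hji]; simp
    set a := (ρ i i).re
    set b := (ρ j j).re
    set nq := Complex.normSq (ρ i j) with hnq
    have key : ∀ t : ℝ, 0 ≤ t^2*a*nq - 2*t*nq + b := by
      intro t
      have h := hρ.1.dotProduct_mulVec_nonneg (Pi.single i (-(t:ℂ) * ρ i j) + Pi.single j 1)
      rw [star_add, ← Pi.single_star, ← Pi.single_star, star_one, Matrix.mulVec_add,
        Matrix.mulVec_single, Matrix.mulVec_single, add_dotProduct,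
        dotProduct_add, dotProduct_add, single_dotProduct,
        single_dotProduct, single_dotProduct, single_dotProduct] at h
      have hre := (Complex.le_def.1 h).1
      simp only [Pi.smul_apply, op_smul_eq_mul, Matrix.col_apply,
        Complex.zero_re, star_mul', star_neg, Complex.star_def, Complex.conj_ofReal,
        Complex.add_re, Complex.mul_re, Complex.mul_im, Complex.one_re, Complex.one_im,
        Complex.neg_re, Complex.neg_im, Complex.ofReal_re, Complex.ofReal_im,
        Complex.conj_re, Complex.conj_im, hii_im, hjj_im, hji_re, hji_im] at hre
      rw [hnq, Complex.normSq_apply]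
      nlinarith [hre]
    have hnq0 : 0 ≤ nq := Complex.normSq_nonneg _
    have hnqab : nq ≤ a * b := by
      rcases eq_or_lt_of_le ha0 with h | h
      · by_contra hcon
        have hpos : 0 < nq := by
          rcases lt_or_eq_of_le hnq0 with h' | h'
          · exact h'
          · exact absurd (by rw [← h']; exact mul_nonneg ha0 hb0) hcon
        have hexp : ((b+1)/(2*nq))^2*a*nq - 2*((b+1)/(2*nq))*nq + b = -1 := by
          rw [← h]; field_simp; ring
        have hk := key ((b+1)/(2*nq))
        rw [hexp] at hk
        linarith
      · have hexp : (1/a)^2*a*nq - 2*(1/a)*nq + b = b - nq/a := by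
          field_simp; ring
        have hk := key (1/a)
        rw [hexp] at hk
        have h2 : nq/a ≤ b := by linarith
        have h3 := (div_le_iff₀ h).mp h2
        nlinarith
    have h1 : nq ≤ 1 := le_trans hnqab (by nlinarith)
    calc ‖ρ i j‖ = Real.sqrt nq := by rw [hnq, Complex.norm_def]
      _ ≤ Real.sqrt 1 := Real.sqrt_le_sqrt h1
      _ = 1 := Real.sqrt_one

lemma isCompact_K : IsCompact (K n) := by
  have hb : Bornology.IsBounded (K n) := by
    have : K n ⊆ Metric.closedBall 0 1 := by
      intro ρ hρ
      rw [Metric.mem_closedBall, dist_zero_right]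
      rw [Matrix.norm_le_iff zero_le_one]
      intro i j
      exact entry_abs_le_one hρ i j
    exact (Metric.isBounded_closedBall).subset this
  exact Metric.isCompact_of_isClosed_isBounded isClosed_K hb

lemma convex_K : Convex ℝ (K n) := by
  rintro ρ hρ τ hτ a b ha hb hab
  constructor
  · rw [posSemidef_iff_dotProduct_mulVec]
    constructor
    · have h1 := hρ.1.1
      have h2 := hτ.1.1
      unfold Matrix.IsHermitian at *
      rw [conjTranspose_add, conjTranspose_smul, conjTranspose_smul, h1, h2]
      norm_num
    · intro x
      have h1 := hρ.1.dotProduct_mulVec_nonneg x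
      have h2 := hτ.1.dotProduct_mulVec_nonneg x
      rw [Matrix.add_mulVec, dotProduct_add, Matrix.smul_mulVec,
        Matrix.smul_mulVec, dotProduct_smul, dotProduct_smul]
      have ha' : 0 ≤ (a:ℂ) := by exact_mod_cast Complex.zero_le_real.mpr ha
      have hb' : 0 ≤ (b:ℂ) := by exact_mod_cast Complex.zero_le_real.mpr hb
      have e1 : a • (star x ⬝ᵥ ρ *ᵥ x) = (a:ℂ) * (star x ⬝ᵥ ρ *ᵥ x) := by
        simp [Complex.real_smul]
      have e2 : b • (star x ⬝ᵥ τ *ᵥ x) = (b:ℂ) * (star x ⬝ᵥ τ *ᵥ x) := by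
        simp [Complex.real_smul]
      rw [e1, e2]
      exact add_nonneg (mul_nonneg ha' h1) (mul_nonneg hb' h2)
  · rw [Matrix.trace_add, Matrix.trace_smul, Matrix.trace_smul, hρ.2, hτ.2]
    simp
    exact_mod_cast congrArg (fun r : ℝ => (r:ℂ)) hab

end CQAux

namespace CQAux
attribute [local instance] Matrix.normedAddCommGroup Matrix.normedSpace
variable {n : ℕ}

def hfun (φ : Mat n × Mat n →L[ℝ] ℝ) (a b : ℝ) : ℝ :=
  sSup ((fun ρ => φ (a • ρ, b • ρ)) '' K n)

lemma hfun_isGreatest (φ : Mat n × Mat n →L[ℝ] ℝ) (hne : (K n).Nonempty) (a b : ℝ) :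
    IsGreatest ((fun ρ => φ (a • ρ, b • ρ)) '' K n) (hfun φ a b) := by
  have hc : Continuous fun ρ : Mat n => φ (a • ρ, b • ρ) :=
    φ.continuous.comp ((continuous_id.const_smul a).prodMk (continuous_id.const_smul b))
  obtain ⟨ρ0, hρ0, hmax⟩ := isCompact_K.exists_isMaxOn hne hc.continuousOn
  have hg : IsGreatest ((fun ρ => φ (a • ρ, b • ρ)) '' K n) (φ (a • ρ0, b • ρ0)) :=
    ⟨⟨ρ0, hρ0, rfl⟩, by rintro y ⟨ρ, hρ, rfl⟩; exact hmax hρ⟩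
  have he : hfun φ a b = φ (a • ρ0, b • ρ0) := hg.csSup_eq
  rw [he]
  exact hg

lemma le_hfun (φ : Mat n × Mat n →L[ℝ] ℝ) (hne : (K n).Nonempty) {a b : ℝ} {ρ : Mat n}
    (hρ : ρ ∈ K n) : φ (a • ρ, b • ρ) ≤ hfun φ a b :=
  (hfun_isGreatest φ hne a b).2 ⟨ρ, hρ, rfl⟩

lemma exists_hfun_eq (φ : Mat n × Mat n →L[ℝ] ℝ) (hne : (K n).Nonempty) (a b : ℝ) :
    ∃ ρ ∈ K n, φ (a • ρ, b • ρ) = hfun φ a b := by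
  obtain ⟨ρ, hρ, h⟩ := (hfun_isGreatest φ hne a b).1
  exact ⟨ρ, hρ, h⟩

lemma hfun_smul (φ : Mat n × Mat n →L[ℝ] ℝ) (hne : (K n).Nonempty) {c : ℝ} (hc : 0 ≤ c)
    (a b : ℝ) : hfun φ (c*a) (c*b) = c * hfun φ a b := by
  have h1 := hfun_isGreatest φ hne a b
  have key : ∀ ρ : Mat n, φ ((c*a) • ρ, (c*b) • ρ) = c * φ (a • ρ, b • ρ) := by
    intro ρ
    have he : ((c*a) • ρ, (c*b) • ρ) = c • ((a • ρ, b • ρ) : Mat n × Mat n) := by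
      rw [Prod.smul_mk, smul_smul, smul_smul]
    rw [he, φ.map_smul, smul_eq_mul]
  have h2 : IsGreatest ((fun ρ => φ ((c*a) • ρ, (c*b) • ρ)) '' K n) (c * hfun φ a b) := by
    constructor
    · obtain ⟨ρ, hρ, hv⟩ := h1.1
      refine ⟨ρ, hρ, ?_⟩
      show φ ((c*a) • ρ, (c*b) • ρ) = c * hfun φ a b
      rw [key]
      exact congrArg (c * ·) hv
    · rintro y ⟨ρ, hρ, rfl⟩
      show φ ((c*a) • ρ, (c*b) • ρ) ≤ c * hfun φ a b
      rw [key]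
      exact mul_le_mul_of_nonneg_left (h1.2 ⟨ρ, hρ, rfl⟩) hc
  exact h2.csSup_eq

lemma hfun_add_le (φ : Mat n × Mat n →L[ℝ] ℝ) (hne : (K n).Nonempty) (a b a' b' : ℝ) :
    hfun φ (a+a') (b+b') ≤ hfun φ a b + hfun φ a' b' := by
  obtain ⟨ρ, hρ, hv⟩ := exists_hfun_eq φ hne (a+a') (b+b')
  rw [← hv]
  have he : φ ((a+a') • ρ, (b+b') • ρ) = φ (a • ρ, b • ρ) + φ (a' • ρ, b' • ρ) := by
    rw [← map_add]
    congr 1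
    rw [Prod.mk_add_mk, add_smul, add_smul]
  rw [he]
  exact add_le_add (le_hfun φ hne hρ) (le_hfun φ hne hρ)

lemma hfun_zero (φ : Mat n × Mat n →L[ℝ] ℝ) (hne : (K n).Nonempty) : hfun φ 0 0 = 0 := by
  have h := hfun_smul φ hne (le_refl 0) 0 0
  simpa using h

end CQAux

namespace CQAux
attribute [local instance] Matrix.normedAddCommGroup Matrix.normedSpace
variable {n : ℕ} (φ : Mat n × Mat n →L[ℝ] ℝ) (hne : (K n).Nonempty)
include hne

lemma g_convexOn : ConvexOn ℝ Set.univ (fun l => hfun φ l 1) := by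
  refine ⟨convex_univ, fun x _ y _ a b ha hb hab => ?_⟩
  simp only [smul_eq_mul]
  calc hfun φ (a*x + b*y) 1 = hfun φ (a*x + b*y) (a*1 + b*1) := by rw [mul_one, mul_one, hab]
    _ ≤ hfun φ (a*x) (a*1) + hfun φ (b*y) (b*1) := hfun_add_le φ hne _ _ _ _
    _ = a * hfun φ x 1 + b * hfun φ y 1 := by
        rw [hfun_smul φ hne ha, hfun_smul φ hne hb]

lemma hfun_line (t : ℝ) :
    hfun φ t 0 ≤ |t| * max (hfun φ 1 0) (hfun φ (-1) 0) := by
  rcases le_or_gt 0 t with ht | ht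
  · have h : hfun φ (t*1) (t*0) = t * hfun φ 1 0 := hfun_smul φ hne ht 1 0
    rw [mul_one, mul_zero] at h
    rw [h, abs_of_nonneg ht]
    exact mul_le_mul_of_nonneg_left (le_max_left _ _) ht
  · have h : hfun φ ((-t)*(-1)) ((-t)*0) = (-t) * hfun φ (-1) 0 :=
      hfun_smul φ hne (by linarith) (-1) 0
    rw [mul_zero] at h
    rw [show (-t)*(-1) = t by ring] at h
    rw [h, abs_of_neg ht]
    exact mul_le_mul_of_nonneg_left (le_max_right _ _) (by linarith)

lemma hfun_C_nonneg : 0 ≤ max (hfun φ 1 0) (hfun φ (-1) 0) := by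
  have h := hfun_add_le φ hne 1 0 (-1) 0
  rw [show (1:ℝ) + (-1) = 0 by ring, add_zero, hfun_zero φ hne] at h
  have h1 := le_max_left (hfun φ 1 0) (hfun φ (-1) 0)
  have h2 := le_max_right (hfun φ 1 0) (hfun φ (-1) 0)
  linarith

lemma g_sub_le (x y : ℝ) : hfun φ x 1 - hfun φ y 1 ≤ hfun φ (x - y) 0 := by
  have h := hfun_add_le φ hne y 1 (x - y) 0
  rw [add_sub_cancel, add_zero] at h
  linarith

lemma g_continuous : Continuous (fun l => hfun φ l 1) := by
  set C := max (hfun φ 1 0) (hfun φ (-1) 0) with hC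
  have hC0 : 0 ≤ C := hfun_C_nonneg φ hne
  have hlip : LipschitzWith (Real.toNNReal C) (fun l => hfun φ l 1) := by
    apply LipschitzWith.of_dist_le_mul
    intro x y
    rw [Real.coe_toNNReal C hC0, Real.dist_eq, Real.dist_eq]
    rw [abs_sub_le_iff]
    constructor
    · calc hfun φ x 1 - hfun φ y 1 ≤ hfun φ (x - y) 0 := g_sub_le φ hne x y
        _ ≤ |x - y| * C := hfun_line φ hne _
        _ = C * |x - y| := mul_comm _ _
    · calc hfun φ y 1 - hfun φ x 1 ≤ hfun φ (y - x) 0 := g_sub_le φ hne y x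
        _ ≤ |y - x| * C := hfun_line φ hne _
        _ = C * |x - y| := by rw [abs_sub_comm, mul_comm]
  exact hlip.continuous

lemma g_div_eq {l : ℝ} (hl : 0 < l) : hfun φ l 1 / l = hfun φ 1 l⁻¹ := by
  have h : hfun φ (l*1) (l*l⁻¹) = l * hfun φ 1 l⁻¹ := hfun_smul φ hne hl.le 1 l⁻¹
  rw [mul_one, mul_inv_cancel₀ hl.ne'] at h
  rw [h]
  field_simp

lemma hfun_scale0 {t : ℝ} (ht : 0 ≤ t) (b : ℝ) : hfun φ 0 (t * b) = t * hfun φ 0 b := by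
  have h := hfun_smul φ hne ht 0 b
  rwa [mul_zero] at h

lemma tendsto_g_div :
    Filter.Tendsto (fun l => hfun φ l 1 / l) Filter.atTop (nhds (hfun φ 1 0)) := by
  have hlow : Filter.Tendsto (fun l : ℝ => hfun φ 1 0 - l⁻¹ * hfun φ 0 (-1))
      Filter.atTop (nhds (hfun φ 1 0)) := by
    have := (tendsto_inv_atTop_zero (𝕜 := ℝ)).mul_const (hfun φ 0 (-1))
    simpa using tendsto_const_nhds.sub this
  have hup : Filter.Tendsto (fun l : ℝ => hfun φ 1 0 + l⁻¹ * hfun φ 0 1)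
      Filter.atTop (nhds (hfun φ 1 0)) := by
    have := (tendsto_inv_atTop_zero (𝕜 := ℝ)).mul_const (hfun φ 0 1)
    simpa using tendsto_const_nhds.add this
  apply tendsto_of_tendsto_of_tendsto_of_le_of_le' hlow hup
  · filter_upwards [Filter.eventually_ge_atTop 1] with l hl
    have hl0 : 0 < l := lt_of_lt_of_le one_pos hl
    rw [g_div_eq φ hne hl0]
    have h1 := hfun_add_le φ hne 1 l⁻¹ 0 (-l⁻¹)
    rw [add_zero, show l⁻¹ + -l⁻¹ = 0 by ring] at h1
    have h2 : hfun φ 0 (-l⁻¹) = l⁻¹ * hfun φ 0 (-1) := by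
      have := hfun_scale0 φ hne (inv_nonneg.mpr hl0.le) (-1)
      rwa [show l⁻¹ * (-1) = -l⁻¹ by ring] at this
    rw [h2] at h1
    linarith
  · filter_upwards [Filter.eventually_ge_atTop 1] with l hl
    have hl0 : 0 < l := lt_of_lt_of_le one_pos hl
    rw [g_div_eq φ hne hl0]
    have h1 := hfun_add_le φ hne 1 0 0 l⁻¹
    rw [add_zero, zero_add] at h1
    have h2 : hfun φ 0 l⁻¹ = l⁻¹ * hfun φ 0 1 := by
      have := hfun_scale0 φ hne (inv_nonneg.mpr hl0.le) 1
      rwa [mul_one] at this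
    rw [h2] at h1
    linarith

lemma recession_g : recessionSlope (fun l => hfun φ l 1) = ((hfun φ 1 0 : ℝ) : EReal) := by
  have h2 : Filter.Tendsto (fun l : ℝ => ((hfun φ l 1 / l : ℝ) : EReal)) Filter.atTop
      (nhds ((hfun φ 1 0 : ℝ) : EReal)) :=
    (continuous_coe_real_ereal.tendsto _).comp (tendsto_g_div φ hne)
  exact h2.limsup_eq

lemma fDiv_hfun {Y : Type*} [Fintype Y] (q0 q1 : Y → ℝ) (h0 : ProbVec q0) (h1 : ProbVec q1) :
    fDiv (fun l => hfun φ l 1) q0 q1 = ((∑ y, hfun φ (q0 y) (q1 y) : ℝ) : EReal) := by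
  rw [fDiv, recession_g φ hne, ← EReal.coe_mul, ← EReal.coe_add, EReal.coe_eq_coe_iff]
  rw [Finset.sum_mul, ← Finset.sum_add_distrib]
  apply Finset.sum_congr rfl
  intro y _
  by_cases h : 0 < q1 y
  · simp only [if_pos h]
    have hs : hfun φ (q1 y * (q0 y / q1 y)) (q1 y * 1) = q1 y * hfun φ (q0 y / q1 y) 1 :=
      hfun_smul φ hne h.le _ _
    rw [mul_div_cancel₀ _ h.ne', mul_one] at hs
    rw [zero_mul, add_zero, ← hs]
  · simp only [if_neg h]
    have hq1 : q1 y = 0 := le_antisymm (not_lt.mp h) (h1.1 y)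
    have hs : hfun φ (q0 y * 1) (q0 y * 0) = q0 y * hfun φ 1 0 :=
      hfun_smul φ hne (h0.1 y) 1 0
    rw [mul_one, mul_zero] at hs
    rw [zero_add, ← hs, hq1]

omit hne in
lemma phi_pair_sum {Y : Type*} [Fintype Y] (ρ : Y → Mat n) (q0 q1 : Y → ℝ) :
    φ (cqApply ρ q0, cqApply ρ q1) = ∑ y, φ ((q0 y) • ρ y, (q1 y) • ρ y) := by
  have hcoe : ∀ (q : Y → ℝ) (y : Y), (q y : ℂ) • ρ y = q y • ρ y := by
    intro q y
    rw [← algebraMap_smul ℂ (q y) (ρ y)]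
    norm_num
  have he : ((cqApply ρ q0 : Mat n), (cqApply ρ q1 : Mat n))
      = ∑ y, (((q0 y) • ρ y : Mat n), ((q1 y) • ρ y : Mat n)) := by
    rw [Prod.ext_iff]
    constructor
    · rw [Prod.fst_sum]
      simp only [cqApply]
      exact Finset.sum_congr rfl fun y _ => hcoe q0 y
    · rw [Prod.snd_sum]
      simp only [cqApply]
      exact Finset.sum_congr rfl fun y _ => hcoe q1 y
  rw [he, map_sum]

lemma phi_le_sum_hfun {Y : Type*} [Fintype Y] (ρ : Y → Mat n)
    (hρ : ∀ y, IsDensityMatrix (ρ y)) (q0 q1 : Y → ℝ) :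
    φ (cqApply ρ q0, cqApply ρ q1) ≤ ∑ y, hfun φ (q0 y) (q1 y) := by
  rw [phi_pair_sum φ ρ q0 q1]
  exact Finset.sum_le_sum fun y _ => le_hfun φ hne (hρ y)

end CQAux

end CQAuxSection

section MainProof
attribute [local instance] Matrix.normedAddCommGroup Matrix.normedSpace

/-- A classical-to-quantum channel `Γ` with `Γ(p0) = σ0` and
`Γ(p1) = σ1` exists iff `D_f(p0‖p1) ≥ D_f^max(σ0‖σ1)` for every convex
continuous `f : [0,∞) → ℝ`. -/
theorem cq_channel_exists_iff_DfMax_le {X : Type*} [Fintype X] {n : ℕ}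
    (p0 p1 : X → ℝ) (hp0 : ProbVec p0) (hp1 : ProbVec p1)
    (σ0 σ1 : Matrix (Fin n) (Fin n) ℂ)
    (hσ0 : IsDensityMatrix σ0) (hσ1 : IsDensityMatrix σ1) :
    (∃ ρ : X → Matrix (Fin n) (Fin n) ℂ, (∀ x, IsDensityMatrix (ρ x)) ∧
        cqApply ρ p0 = σ0 ∧ cqApply ρ p1 = σ1) ↔
      ∀ f : ℝ → ℝ, ConvexOn ℝ (Set.Ici 0) f → ContinuousOn f (Set.Ici 0) →
        DfMax f σ0 σ1 ≤ fDiv f p0 p1 := by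
  simp only [DfMax]
  constructor
  · rintro ⟨ρ, hρ, h0, h1⟩ f hconv hcont
    set e := Fintype.equivFin X with he
    apply sInf_le
    refine ⟨Fintype.card X, p0 ∘ e.symm, p1 ∘ e.symm, ρ ∘ e.symm, ?_, ?_, fun i => hρ _,
      ?_, ?_, ?_⟩
    · exact ⟨fun i => hp0.1 _, by rw [← hp0.2]; exact e.symm.sum_comp p0⟩
    · exact ⟨fun i => hp1.1 _, by rw [← hp1.2]; exact e.symm.sum_comp p1⟩
    · rw [← h0]
      exact e.symm.sum_comp (fun x => (p0 x : ℂ) • ρ x)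
    · rw [← h1]
      exact e.symm.sum_comp (fun x => (p1 x : ℂ) • ρ x)
    · rw [fDiv, fDiv]
      simp only [Function.comp_apply]
      rw [e.symm.sum_comp (fun x => if 0 < p1 x then p1 x * f (p0 x / p1 x) else 0),
        e.symm.sum_comp (fun x => if 0 < p1 x then 0 else p0 x)]
  · intro hDf
    by_contra hno
    have hne : (CQAux.K n).Nonempty := ⟨σ0, hσ0⟩
    set Kfam : Set (X → CQAux.Mat n) := Set.univ.pi (fun _ => CQAux.K n) with hKfam
    set T : Set (CQAux.Mat n × CQAux.Mat n) :=
      (fun ρ : X → CQAux.Mat n => ((cqApply ρ p0 : CQAux.Mat n), (cqApply ρ p1 : CQAux.Mat n)))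
        '' Kfam with hT
    have hTconv : Convex ℝ T := by
      rintro _ ⟨ρ, hρ, rfl⟩ _ ⟨τ, hτ, rfl⟩ a b ha hb hab
      refine ⟨fun x => a • ρ x + b • τ x,
        fun x _ => CQAux.convex_K (hρ x (Set.mem_univ x)) (hτ x (Set.mem_univ x)) ha hb hab, ?_⟩
      have hl : ∀ p : X → ℝ, cqApply (fun x => a • ρ x + b • τ x) p
          = a • cqApply ρ p + b • cqApply τ p := by
        intro p
        rw [cqApply, cqApply, cqApply, Finset.smul_sum, Finset.smul_sum,
          ← Finset.sum_add_distrib]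
        apply Finset.sum_congr rfl
        intro x _
        rw [smul_add, smul_comm ((p x : ℂ)) a, smul_comm ((p x : ℂ)) b]
      simp only [hl]
      rfl
    have hKfamc : IsCompact Kfam := isCompact_univ_pi (fun _ => CQAux.isCompact_K)
    have hmapc : Continuous (fun ρ : X → CQAux.Mat n =>
        ((cqApply ρ p0 : CQAux.Mat n), (cqApply ρ p1 : CQAux.Mat n))) := by
      apply Continuous.prodMk <;>
      · apply continuous_finset_sum
        intro x _
        fun_prop
    have hTcomp : IsCompact T := hKfamc.image hmapc
    have hσT : ((σ0, σ1) : CQAux.Mat n × CQAux.Mat n) ∉ T := by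
      rintro ⟨ρ, hρmem, heq⟩
      exact hno ⟨ρ, fun x => hρmem x (Set.mem_univ x),
        congrArg Prod.fst heq, congrArg Prod.snd heq⟩
    haveI : LocallyConvexSpace ℝ (CQAux.Mat n × CQAux.Mat n) := NormedSpace.toLocallyConvexSpace
    obtain ⟨φ, u, hfu, huσ⟩ :=
      geometric_hahn_banach_closed_point hTconv hTcomp.isClosed hσT
    have hchain : ((φ (σ0, σ1) : ℝ) : EReal) ≤ fDiv (fun l => CQAux.hfun φ l 1) p0 p1 := by
      refine le_trans ?_ (hDf (fun l => CQAux.hfun φ l 1)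
        ((CQAux.g_convexOn φ hne).subset (Set.subset_univ _) (convex_Ici 0))
        ((CQAux.g_continuous φ hne).continuousOn))
      apply le_sInf
      rintro d ⟨m, q0, q1, ρ, hq0, hq1, hρ, hc0, hc1, rfl⟩
      rw [CQAux.fDiv_hfun φ hne q0 q1 hq0 hq1, EReal.coe_le_coe_iff]
      have h := CQAux.phi_le_sum_hfun φ hne ρ hρ q0 q1
      rwa [hc0, hc1] at h
    rw [CQAux.fDiv_hfun φ hne p0 p1 hp0 hp1, EReal.coe_le_coe_iff] at hchain
    choose ρm hρm hρval using fun x : X => CQAux.exists_hfun_eq φ hne (p0 x) (p1 x)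
    have hmem : ρm ∈ Kfam := fun x _ => hρm x
    have hval : φ ((cqApply ρm p0 : CQAux.Mat n), (cqApply ρm p1 : CQAux.Mat n))
        = ∑ x, CQAux.hfun φ (p0 x) (p1 x) := by
      rw [CQAux.phi_pair_sum φ ρm p0 p1]
      exact Finset.sum_congr rfl fun x _ => hρval x
    have hlt : φ ((cqApply ρm p0 : CQAux.Mat n), (cqApply ρm p1 : CQAux.Mat n)) < u :=
      hfu _ ⟨ρm, hmem, rfl⟩
    rw [hval] at hlt
    linarith


end MainProof
end

section
/- Let f : [0,∞) → ℝ be continuous. Suppose that for every n, every positive definite n×n complex matrix σ1 and every positive semidefinite n×n complex matrix σ0 (of arbitrary positive traces), the infimum of Σ_{x∈X} q1(x)·f(q0(x)/q1(x)) — taken over all finite sets X, all functions q1 : X → (0,∞) and q0 : X → [0,∞), and all families (ρ_x)_{x∈X} of n×n density matrices satisfying Σ_x q0(x)·ρ_x = σ0 and Σ_x q1(x)·ρ_x = σ1 — equals tr(σ1·f(σ1^{−1/2} σ0 σ1^{−1/2})), where σ1^{−1/2} is the inverse of the positive square root of σ1 and f is applied via the spectral functional calculus. Then f is operator convex. -/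
open Matrix
open scoped Kronecker ComplexOrder

section AuxOC

open Polynomial Filter Topology

variable {n : ℕ}

private lemma real_smul_matC (r : ℝ) (X : Matrix (Fin n) (Fin n) ℂ) :
    r • X = (r : ℂ) • X := by
  ext i j; simp [Complex.real_smul]

private lemma diag_conjT (d : Fin n → ℝ) :
    (Matrix.diagonal (fun i => (d i : ℂ)))ᴴ = Matrix.diagonal (fun i => (d i : ℂ)) := by
  ext i j
  rcases eq_or_ne i j with rfl | hij
  · simp [Complex.conj_ofReal]
  · simp [Matrix.conjTranspose_apply, Matrix.diagonal_apply_ne _ hij,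
      Matrix.diagonal_apply_ne _ (Ne.symm hij)]

private lemma conj_diag_isHermitian (U : Matrix (Fin n) (Fin n) ℂ) (d : Fin n → ℝ) :
    (U * Matrix.diagonal (fun i => (d i : ℂ)) * star U).IsHermitian := by
  rw [Matrix.IsHermitian, Matrix.star_eq_conjTranspose, Matrix.conjTranspose_mul,
    Matrix.conjTranspose_mul, Matrix.conjTranspose_conjTranspose, diag_conjT, mul_assoc]

/-- Conjugation by a unitary as an `ℝ`-algebra hom. -/
private noncomputable def conjAH (U : Matrix (Fin n) (Fin n) ℂ) (h1 : star U * U = 1)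
    (h2 : U * star U = 1) :
    Matrix (Fin n) (Fin n) ℂ →ₐ[ℝ] Matrix (Fin n) (Fin n) ℂ where
  toFun X := U * X * star U
  map_one' := by show U * 1 * star U = 1; rw [mul_one, h2]
  map_mul' X Y := by
    show U * (X * Y) * star U = (U * X * star U) * (U * Y * star U)
    have e : (U * X * star U) * (U * Y * star U) = U * X * ((star U * U) * (Y * star U)) := by
      simp only [mul_assoc]
    rw [e, h1, one_mul, ← mul_assoc, ← mul_assoc]
  map_zero' := by show U * 0 * star U = 0; simp
  map_add' X Y := by show U * (X + Y) * star U = _; simp [mul_add, add_mul]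
  commutes' r := by
    show U * algebraMap ℝ _ r * star U = algebraMap ℝ _ r
    simp only [Algebra.algebraMap_eq_smul_one]
    rw [mul_smul_comm, mul_one, smul_mul_assoc, h2]

private lemma aeval_conj (U : Matrix (Fin n) (Fin n) ℂ) (h1 : star U * U = 1)
    (h2 : U * star U = 1) (v : Fin n → ℂ) (p : ℝ[X]) :
    aeval (U * Matrix.diagonal v * star U) p
      = U * Matrix.diagonal (fun i => aeval (v i) p) * star U := by
  have e1 : U * Matrix.diagonal v * star U = conjAH U h1 h2 (Matrix.diagonalAlgHom ℝ v) := rfl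
  rw [e1, aeval_algHom_apply, aeval_algHom_apply]
  have e2 : aeval v p = fun i => aeval (v i) p := by
    funext i
    exact (aeval_algHom_apply (Pi.evalAlgHom ℝ (fun _ => ℂ) i) v p).symm
  show U * Matrix.diagonal (aeval v p) * star U = _
  rw [e2]

private lemma hermCFC_conj (f : ℝ → ℝ) (U : Matrix (Fin n) (Fin n) ℂ)
    (h1 : star U * U = 1) (h2 : U * star U = 1) (d : Fin n → ℝ) :
    hermCFC f (U * Matrix.diagonal (fun i => (d i : ℂ)) * star U)
      = U * Matrix.diagonal (fun i => (f (d i) : ℂ)) * star U := by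
  set A := U * Matrix.diagonal (fun i => (d i : ℂ)) * star U with hAdef
  have hA : A.IsHermitian := conj_diag_isHermitian U d
  set V : Matrix (Fin n) (Fin n) ℂ := (hA.eigenvectorUnitary : Matrix (Fin n) (Fin n) ℂ) with hVdef
  have hV2 : V * star V = 1 := Matrix.mem_unitaryGroup_iff.mp hA.eigenvectorUnitary.2
  have hV1 : star V * V = 1 := Matrix.mem_unitaryGroup_iff'.mp hA.eigenvectorUnitary.2
  set μ := hA.eigenvalues with hμdef
  have hspec : A = V * Matrix.diagonal (fun i => (μ i : ℂ)) * star V := by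
    have := hA.spectral_theorem
    simp only [Unitary.conjStarAlgAut_apply, Unitary.coe_star] at this
    exact this
  set T : Finset ℝ := Finset.image d Finset.univ ∪ Finset.image μ Finset.univ with hTdef
  set p := Lagrange.interpolate T id f with hpdef
  have hp : ∀ x ∈ T, p.eval x = f x := by
    intro x hx
    exact Lagrange.eval_interpolate_at_node f (Set.injOn_id _) hx
  have key : ∀ (W : Matrix (Fin n) (Fin n) ℂ) (e : Fin n → ℝ),
      star W * W = 1 → W * star W = 1 → (∀ i, e i ∈ T) →
      W * Matrix.diagonal (fun i => (f (e i) : ℂ)) * star W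
        = aeval (W * Matrix.diagonal (fun i => (e i : ℂ)) * star W) p := by
    intro W e hw1 hw2 he
    rw [aeval_conj W hw1 hw2]
    have hfun : (fun i => ((f (e i) : ℝ) : ℂ)) = fun i => aeval ((e i : ℂ)) p := by
      funext i
      have e1 : aeval ((e i : ℂ)) p = ((p.eval (e i) : ℝ) : ℂ) := by
        have := aeval_algebraMap_apply_eq_algebraMap_eval (A := ℂ) (e i) p
        simpa using this
      rw [e1, hp _ (he i)]
    rw [hfun]
  have hAc : hermCFC f A = V * Matrix.diagonal (fun i => (f (μ i) : ℂ)) * star V := by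
    rw [hermCFC, dif_pos hA]
  rw [hAc]
  have hkV := key V μ hV1 hV2 (fun i => Finset.mem_union_right _
    (Finset.mem_image_of_mem μ (Finset.mem_univ i)))
  have hkU := key U d h1 h2 (fun i => Finset.mem_union_left _
    (Finset.mem_image_of_mem d (Finset.mem_univ i)))
  rw [hkV, ← hspec, hAdef, ← hkU]

private lemma unitary_facts {A : Matrix (Fin n) (Fin n) ℂ} (hA : A.IsHermitian) :
    ((hA.eigenvectorUnitary : Matrix (Fin n) (Fin n) ℂ) *
        star (hA.eigenvectorUnitary : Matrix (Fin n) (Fin n) ℂ) = 1) ∧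
      (star (hA.eigenvectorUnitary : Matrix (Fin n) (Fin n) ℂ) *
        (hA.eigenvectorUnitary : Matrix (Fin n) (Fin n) ℂ) = 1) :=
  ⟨Matrix.mem_unitaryGroup_iff.mp hA.eigenvectorUnitary.2,
   Matrix.mem_unitaryGroup_iff'.mp hA.eigenvectorUnitary.2⟩

private lemma hermCFC_isHermitian (f : ℝ → ℝ) {A : Matrix (Fin n) (Fin n) ℂ}
    (hA : A.IsHermitian) : (hermCFC f A).IsHermitian := by
  rw [hermCFC, dif_pos hA]
  exact conj_diag_isHermitian _ _

private lemma hermCFC_mul (g g' : ℝ → ℝ) {A : Matrix (Fin n) (Fin n) ℂ}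
    (hA : A.IsHermitian) :
    hermCFC g A * hermCFC g' A = hermCFC (fun x => g x * g' x) A := by
  rw [hermCFC, hermCFC, hermCFC, dif_pos hA, dif_pos hA, dif_pos hA]
  set V : Matrix (Fin n) (Fin n) ℂ := (hA.eigenvectorUnitary : Matrix (Fin n) (Fin n) ℂ)
  have hV1 : star V * V = 1 := (unitary_facts hA).2
  have e : (V * Matrix.diagonal (fun i => (g (hA.eigenvalues i) : ℂ)) * star V) *
      (V * Matrix.diagonal (fun i => (g' (hA.eigenvalues i) : ℂ)) * star V)
      = V * (Matrix.diagonal (fun i => (g (hA.eigenvalues i) : ℂ)) *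
          Matrix.diagonal (fun i => (g' (hA.eigenvalues i) : ℂ))) * star V := by
    have e2 : (V * Matrix.diagonal (fun i => (g (hA.eigenvalues i) : ℂ)) * star V) *
        (V * Matrix.diagonal (fun i => (g' (hA.eigenvalues i) : ℂ)) * star V)
        = V * Matrix.diagonal (fun i => (g (hA.eigenvalues i) : ℂ)) * ((star V * V) *
            (Matrix.diagonal (fun i => (g' (hA.eigenvalues i) : ℂ)) * star V)) := by
      simp only [mul_assoc]
    rw [e2, hV1, one_mul]
    simp only [mul_assoc]
  rw [e, Matrix.diagonal_mul_diagonal]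
  congr 2
  funext i
  push_cast
  ring

private lemma hermCFC_eq_one (g : ℝ → ℝ) {A : Matrix (Fin n) (Fin n) ℂ}
    (hA : A.IsHermitian) (hg : ∀ i, g (hA.eigenvalues i) = 1) : hermCFC g A = 1 := by
  rw [hermCFC, dif_pos hA]
  have : (fun i => (g (hA.eigenvalues i) : ℂ)) = fun _ => (1 : ℂ) := by
    funext i; rw [hg i]; norm_num
  rw [this]
  have : Matrix.diagonal (fun _ : Fin n => (1 : ℂ)) = 1 := Matrix.diagonal_one
  rw [this, mul_one]
  exact (unitary_facts hA).1

private lemma quad_form_star {D : Matrix (Fin n) (Fin n) ℂ} (hD : D.IsHermitian)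
    (x : Fin n → ℂ) : star (star x ⬝ᵥ D *ᵥ x) = star x ⬝ᵥ D *ᵥ x := by
  have h1 : star x ⬝ᵥ D *ᵥ x = star (star (D *ᵥ x) ⬝ᵥ x) := by
    rw [Matrix.star_dotProduct]
  calc star (star x ⬝ᵥ D *ᵥ x) = star (star (star (D *ᵥ x) ⬝ᵥ x)) := by rw [h1]
    _ = star (D *ᵥ x) ⬝ᵥ x := star_star _
    _ = (star x ᵥ* Dᴴ) ⬝ᵥ x := by rw [Matrix.star_mulVec]
    _ = star x ⬝ᵥ Dᴴ *ᵥ x := (Matrix.dotProduct_mulVec _ _ _).symm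
    _ = star x ⬝ᵥ D *ᵥ x := by rw [hD.eq]

private lemma psd_diag_nonneg {A : Matrix (Fin n) (Fin n) ℂ} (hA : A.PosSemidef)
    (i : Fin n) : 0 ≤ A i i := by
  have := hA.dotProduct_mulVec_nonneg (Pi.single i 1)
  simpa [dotProduct, Matrix.mulVec, Pi.single_apply] using this

private lemma pd_diag_pos {A : Matrix (Fin n) (Fin n) ℂ} (hA : A.PosDef)
    (i : Fin n) : 0 < A i i := by
  have hne : (Pi.single i 1 : Fin n → ℂ) ≠ 0 := by
    intro hcon
    have := congrFun hcon i
    simp [Pi.single_apply] at this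
  have := hA.dotProduct_mulVec_pos hne
  simpa [dotProduct, Matrix.mulVec, Pi.single_apply] using this

private lemma psd_trace_re_nonneg {A : Matrix (Fin n) (Fin n) ℂ} (hA : A.PosSemidef) :
    0 ≤ A.trace.re := by
  rw [Matrix.trace, Complex.re_sum]
  refine Finset.sum_nonneg fun i _ => ?_
  have := psd_diag_nonneg hA i
  rw [Complex.le_def] at this
  simpa using this.1

private lemma pd_trace_re_pos [Nonempty (Fin n)] {A : Matrix (Fin n) (Fin n) ℂ}
    (hA : A.PosDef) : 0 < A.trace.re := by
  rw [Matrix.trace, Complex.re_sum]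
  refine Finset.sum_pos (fun i _ => ?_) Finset.univ_nonempty
  have := pd_diag_pos hA i
  rw [Complex.lt_def] at this
  simpa using this.1

private lemma posDef_conj {X Mm N : Matrix (Fin n) (Fin n) ℂ} (hX : X.PosDef)
    (hH : Mm.IsHermitian) (hNM : N * Mm = 1) : (Mm * X * Mm).PosDef := by
  have hinj : ∀ y : Fin n → ℂ, Mm *ᵥ y = 0 → y = 0 := by
    intro y hy
    have : N *ᵥ (Mm *ᵥ y) = y := by
      rw [Matrix.mulVec_mulVec, hNM, Matrix.one_mulVec]
    rw [hy, Matrix.mulVec_zero] at this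
    exact this.symm
  refine Matrix.PosDef.of_dotProduct_mulVec_pos ?_ ?_
  · rw [Matrix.IsHermitian, Matrix.conjTranspose_mul, Matrix.conjTranspose_mul,
      hH.eq, hX.isHermitian.eq, mul_assoc]
  · intro y hy
    have hMy : Mm *ᵥ y ≠ 0 := fun hc => hy (hinj y hc)
    have e : star y ⬝ᵥ (Mm * X * Mm) *ᵥ y = star (Mm *ᵥ y) ⬝ᵥ X *ᵥ (Mm *ᵥ y) := by
      have e1 : (Mm * X * Mm) *ᵥ y = Mm *ᵥ (X *ᵥ (Mm *ᵥ y)) := by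
        rw [Matrix.mulVec_mulVec, Matrix.mulVec_mulVec]
      have e2 : star (Mm *ᵥ y) = star y ᵥ* Mm := by
        rw [Matrix.star_mulVec, hH.eq]
      rw [e1, Matrix.dotProduct_mulVec, ← e2]
    rw [e]
    exact hX.dotProduct_mulVec_pos hMy

private lemma psd_smul {r : ℝ} (hr : 0 ≤ r) {A : Matrix (Fin n) (Fin n) ℂ}
    (hA : A.PosSemidef) : (r • A).PosSemidef := by
  refine Matrix.PosSemidef.of_dotProduct_mulVec_nonneg ?_ ?_
  · rw [Matrix.IsHermitian, Matrix.conjTranspose_smul, star_trivial, hA.1.eq]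
  · intro x
    have e : star x ⬝ᵥ (r • A) *ᵥ x = (r : ℂ) * (star x ⬝ᵥ A *ᵥ x) := by
      rw [real_smul_matC, Matrix.smul_mulVec, dotProduct_smul, smul_eq_mul]
    rw [e]
    have h0 := hA.dotProduct_mulVec_nonneg x
    rw [Complex.le_def] at h0 ⊢
    constructor
    · simp only [Complex.mul_re, Complex.ofReal_re, Complex.ofReal_im, Complex.zero_re]
      have := h0.1
      simp only [Complex.zero_re] at this
      have him := h0.2
      simp only [Complex.zero_im] at him
      rw [← him]
      simpa using mul_nonneg hr this
    · simp only [Complex.mul_im, Complex.ofReal_re, Complex.ofReal_im, Complex.zero_im]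
      have him := h0.2
      simp only [Complex.zero_im] at him
      rw [← him]
      ring

private lemma psd_zero : (0 : Matrix (Fin n) (Fin n) ℂ).PosSemidef := by
  refine Matrix.PosSemidef.of_dotProduct_mulVec_nonneg ?_ ?_
  · simp [Matrix.IsHermitian]
  · intro x
    simp

private lemma smul_one_pd {r : ℝ} (hr : 0 < r) :
    (r • (1 : Matrix (Fin n) (Fin n) ℂ)).PosDef := by
  have e : r • (1 : Matrix (Fin n) (Fin n) ℂ)
      = Matrix.diagonal (fun _ => (r : ℂ)) := by
    ext i j
    rcases eq_or_ne i j with rfl | hij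
    · simp [Matrix.one_apply, Complex.real_smul]
    · simp [Matrix.one_apply_ne hij, Matrix.diagonal_apply_ne _ hij]
  rw [e]
  rw [Matrix.posDef_diagonal_iff]
  intro i
  exact_mod_cast hr

private lemma trace_conj_diag (S W : Matrix (Fin n) (Fin n) ℂ) (c : Fin n → ℝ) :
    (S * (W * Matrix.diagonal (fun i => (c i : ℂ)) * star W)).trace.re
      = ∑ i, ((star W * S * W) i i).re * c i := by
  have e1 : (S * (W * Matrix.diagonal (fun i => (c i : ℂ)) * star W)).trace
      = ((star W * S * W) * Matrix.diagonal (fun i => (c i : ℂ))).trace := by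
    rw [show S * (W * Matrix.diagonal (fun i => (c i : ℂ)) * star W)
        = (S * W * Matrix.diagonal (fun i => (c i : ℂ))) * star W by simp only [mul_assoc]]
    rw [Matrix.trace_mul_comm]
    simp only [mul_assoc]
  rw [e1, Matrix.trace, Complex.re_sum]
  refine Finset.sum_congr rfl fun i _ => ?_
  simp [Matrix.diag, Matrix.mul_diagonal, Complex.mul_re]

private lemma spectral' {A : Matrix (Fin n) (Fin n) ℂ} (hA : A.IsHermitian) :
    A = (hA.eigenvectorUnitary : Matrix (Fin n) (Fin n) ℂ) *
        Matrix.diagonal (fun i => (hA.eigenvalues i : ℂ)) *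
        star (hA.eigenvectorUnitary : Matrix (Fin n) (Fin n) ℂ) := by
  have := hA.spectral_theorem
  simp only [Unitary.conjStarAlgAut_apply, Unitary.coe_star] at this
  exact this

private lemma shift_decomp {A : Matrix (Fin n) (Fin n) ℂ} (hA : A.IsHermitian) (δ : ℝ) :
    A + δ • (1 : Matrix (Fin n) (Fin n) ℂ)
      = (hA.eigenvectorUnitary : Matrix (Fin n) (Fin n) ℂ) *
        Matrix.diagonal (fun i => ((hA.eigenvalues i + δ : ℝ) : ℂ)) *
        star (hA.eigenvectorUnitary : Matrix (Fin n) (Fin n) ℂ) := by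
  set V : Matrix (Fin n) (Fin n) ℂ := (hA.eigenvectorUnitary : Matrix (Fin n) (Fin n) ℂ)
  have hV2 : V * star V = 1 := (unitary_facts hA).1
  have e1 : Matrix.diagonal (fun i => ((hA.eigenvalues i + δ : ℝ) : ℂ))
      = Matrix.diagonal (fun i => (hA.eigenvalues i : ℂ))
        + Matrix.diagonal (fun _ => (δ : ℂ)) := by
    rw [Matrix.diagonal_add]
    funext i
    push_cast
    ring
  have e2 : V * Matrix.diagonal (fun _ : Fin n => (δ : ℂ)) * star V
      = δ • (1 : Matrix (Fin n) (Fin n) ℂ) := by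
    have e3 : Matrix.diagonal (fun _ : Fin n => (δ : ℂ))
        = (δ : ℂ) • (1 : Matrix (Fin n) (Fin n) ℂ) := by
      ext i j
      rcases eq_or_ne i j with rfl | hij
      · simp [Matrix.one_apply]
      · simp [Matrix.one_apply_ne hij, Matrix.diagonal_apply_ne _ hij]
    rw [e3, mul_smul_comm, mul_one, smul_mul_assoc, hV2, real_smul_matC]
  rw [e1, mul_add, add_mul, e2, ← spectral' hA]

private lemma trace_hermCFC_shift (f : ℝ → ℝ) {A : Matrix (Fin n) (Fin n) ℂ}
    (hA : A.PosSemidef) (S : Matrix (Fin n) (Fin n) ℂ) (δ : ℝ) :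
    (S * hermCFC f (A + δ • 1)).trace.re
      = ∑ i, ((star (hA.1.eigenvectorUnitary : Matrix (Fin n) (Fin n) ℂ) * S *
          (hA.1.eigenvectorUnitary : Matrix (Fin n) (Fin n) ℂ)) i i).re
            * f (hA.1.eigenvalues i + δ) := by
  rw [shift_decomp hA.1 δ,
    hermCFC_conj f _ (unitary_facts hA.1).2 (unitary_facts hA.1).1 (fun i => hA.1.eigenvalues i + δ),
    trace_conj_diag]

private lemma vecMulVec_psd (x : Fin n → ℂ) : (Matrix.vecMulVec x (star x)).PosSemidef := by
  have e : Matrix.vecMulVec x (star x) = Matrix.replicateCol Unit x * (Matrix.replicateCol Unit x)ᴴ := by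
    rw [Matrix.conjTranspose_replicateCol, Matrix.vecMulVec_eq Unit]
  rw [e]
  exact Matrix.posSemidef_self_mul_conjTranspose _

private lemma trace_vecMulVec_mul (x : Fin n → ℂ) (X : Matrix (Fin n) (Fin n) ℂ) :
    (Matrix.vecMulVec x (star x) * X).trace = star x ⬝ᵥ X *ᵥ x := by
  simp only [Matrix.trace, Matrix.diag, Matrix.mul_apply, Matrix.vecMulVec_apply,
    dotProduct, Matrix.mulVec, Pi.star_apply]
  rw [Finset.sum_comm]
  refine Finset.sum_congr rfl fun j _ => ?_
  rw [Finset.mul_sum]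
  refine Finset.sum_congr rfl fun i _ => ?_
  ring

end AuxOC


/-- If for all positive definite `σ1` and positive semidefinite
`σ0` (of arbitrary positive traces) the minimal classical `f`-quantity over all
classical representations equals `tr σ1 f(σ1^{-1/2} σ0 σ1^{-1/2})`,
then `f` is operator convex. -/
theorem operatorConvex_of_min_repr_eq (f : ℝ → ℝ) (hf : ContinuousOn f (Set.Ici 0))
    (h : ∀ (n : ℕ) (σ0 σ1 : Matrix (Fin n) (Fin n) ℂ),
      σ0.PosSemidef → σ1.PosDef → 0 < σ0.trace.re → 0 < σ1.trace.re →
      sInf { d : EReal |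
        ∃ (m : ℕ) (q0 q1 : Fin m → ℝ) (ρ : Fin m → Matrix (Fin n) (Fin n) ℂ),
          (∀ x, 0 ≤ q0 x) ∧ (∀ x, 0 < q1 x) ∧ (∀ x, IsDensityMatrix (ρ x)) ∧
          cqApply ρ q0 = σ0 ∧ cqApply ρ q1 = σ1 ∧
          d = ((∑ x, q1 x * f (q0 x / q1 x) : ℝ) : EReal) } =
        (((σ1 * hermCFC f (invSqrtMat σ1 * σ0 * invSqrtMat σ1)).trace.re : ℝ) : EReal)) :
    OperatorConvex f := by
  intro n A B hA hB t ht0 ht1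
  rcases Nat.eq_zero_or_pos n with hn | hn
  · subst hn
    refine Matrix.PosSemidef.of_dotProduct_mulVec_nonneg ?_ fun x => ?_
    · ext i j
      exact i.elim0
    · simp [dotProduct]
  haveI : Nonempty (Fin n) := Fin.pos_iff_nonempty.mp hn
  rcases eq_or_lt_of_le ht0 with h0 | ht0'
  · rw [← h0]
    simp only [zero_smul, sub_zero, one_smul, zero_add]
    rw [sub_self]
    exact psd_zero
  rcases eq_or_lt_of_le ht1 with h1 | ht1'
  · rw [h1]
    simp only [sub_self, zero_smul, one_smul, add_zero]
    exact psd_zero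
  -- main case : 0 < t < 1
  set C := t • A + (1 - t) • B with hCdef
  have hC : C.PosSemidef := by
    refine Matrix.PosSemidef.of_dotProduct_mulVec_nonneg ((psd_smul ht0 hA).1.add (psd_smul (by linarith) hB).1) fun x => ?_
    rw [Matrix.add_mulVec, dotProduct_add]
    exact add_nonneg ((psd_smul ht0 hA).dotProduct_mulVec_nonneg x) ((psd_smul (by linarith : (0:ℝ) ≤ 1 - t) hB).dotProduct_mulVec_nonneg x)
  have MAIN : ∀ S : Matrix (Fin n) (Fin n) ℂ, S.PosDef →
      (S * hermCFC f C).trace.re ≤ t * (S * hermCFC f A).trace.re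
        + (1 - t) * (S * hermCFC f B).trace.re := by
    intro S hS
    set M := hermCFC Real.sqrt S with hMdef
    have hSH : S.IsHermitian := hS.isHermitian
    have hMH : M.IsHermitian := hermCFC_isHermitian _ hSH
    have hinv : invSqrtMat S = hermCFC (fun x => if x = 0 then 0 else (Real.sqrt x)⁻¹) S := rfl
    have hNM : invSqrtMat S * M = 1 := by
      rw [hinv, hMdef, hermCFC_mul _ _ hSH]
      refine hermCFC_eq_one _ hSH fun i => ?_
      have hpos := hS.eigenvalues_pos i
      rw [if_neg hpos.ne']
      exact inv_mul_cancel₀ (Real.sqrt_ne_zero'.mpr hpos)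
    have hMN : M * invSqrtMat S = 1 := by
      rw [hinv, hMdef, hermCFC_mul _ _ hSH]
      refine hermCFC_eq_one _ hSH fun i => ?_
      have hpos := hS.eigenvalues_pos i
      rw [if_neg hpos.ne']
      exact mul_inv_cancel₀ (Real.sqrt_ne_zero'.mpr hpos)
    have key : ∀ δ : ℝ, 0 < δ →
        (S * hermCFC f (C + δ • 1)).trace.re
          ≤ t * (S * hermCFC f (A + δ • 1)).trace.re
            + (1 - t) * (S * hermCFC f (B + δ • 1)).trace.re := by
      intro δ hδ
      have hδ1 : ((δ : ℝ) • (1 : Matrix (Fin n) (Fin n) ℂ)).PosDef := smul_one_pd hδ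
      have hApd : (A + δ • 1).PosDef := Matrix.PosDef.posSemidef_add hA hδ1
      have hBpd : (B + δ • 1).PosDef := Matrix.PosDef.posSemidef_add hB hδ1
      have hCpd : (C + δ • 1).PosDef := Matrix.PosDef.posSemidef_add hC hδ1
      set σA := M * (A + δ • 1) * M with hσAdef
      set σB := M * (B + δ • 1) * M with hσBdef
      set σC := M * (C + δ • 1) * M with hσCdef
      have hσA : σA.PosDef := posDef_conj hApd hMH hNM
      have hσB : σB.PosDef := posDef_conj hBpd hMH hNM
      have hσC : σC.PosDef := posDef_conj hCpd hMH hNM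
      have cancel : ∀ X : Matrix (Fin n) (Fin n) ℂ,
          invSqrtMat S * (M * X * M) * invSqrtMat S = X := by
        intro X
        calc invSqrtMat S * (M * X * M) * invSqrtMat S
            = (invSqrtMat S * M) * X * (M * invSqrtMat S) := by simp only [mul_assoc]
          _ = X := by rw [hNM, hMN, one_mul, mul_one]
      have hsplit : σC = t • σA + (1 - t) • σB := by
        have e0 : C + δ • (1 : Matrix (Fin n) (Fin n) ℂ)
            = t • (A + δ • 1) + (1 - t) • (B + δ • 1) := by
          rw [hCdef]
          module
        rw [hσCdef, e0, mul_add, add_mul, hσAdef, hσBdef,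
          mul_smul_comm, mul_smul_comm, smul_mul_assoc, smul_mul_assoc]
      have htrS : 0 < S.trace.re := pd_trace_re_pos hS
      have eqA := h n σA S hσA.posSemidef hS (pd_trace_re_pos hσA) htrS
      have eqB := h n σB S hσB.posSemidef hS (pd_trace_re_pos hσB) htrS
      have eqC := h n σC S hσC.posSemidef hS (pd_trace_re_pos hσC) htrS
      have cancelA : invSqrtMat S * σA * invSqrtMat S = A + δ • 1 := by
        rw [hσAdef]; exact cancel _
      have cancelB : invSqrtMat S * σB * invSqrtMat S = B + δ • 1 := by
        rw [hσBdef]; exact cancel _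
      have cancelC : invSqrtMat S * σC * invSqrtMat S = C + δ • 1 := by
        rw [hσCdef]; exact cancel _
      rw [cancelA] at eqA
      rw [cancelB] at eqB
      rw [cancelC] at eqC
      set FA := (S * hermCFC f (A + δ • 1)).trace.re with hFAdef
      set FB := (S * hermCFC f (B + δ • 1)).trace.re with hFBdef
      set FC := (S * hermCFC f (C + δ • 1)).trace.re with hFCdef
      have bound : ∀ ε : ℝ, 0 < ε → FC ≤ t * FA + (1 - t) * FB + ε := by
        intro ε hε
        obtain ⟨dA, hdA, hdAlt⟩ := sInf_lt_iff.mp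
          (lt_of_eq_of_lt eqA (EReal.coe_lt_coe_iff.mpr (by linarith : FA < FA + ε)))
        obtain ⟨mA, q0A, q1A, ρA, hq0A, hq1A, hρA, hcA0, hcA1, hdAeq⟩ := hdA
        rw [hdAeq] at hdAlt
        have hvalA : (∑ x, q1A x * f (q0A x / q1A x)) < FA + ε := by
          exact_mod_cast hdAlt
        obtain ⟨dB, hdB, hdBlt⟩ := sInf_lt_iff.mp
          (lt_of_eq_of_lt eqB (EReal.coe_lt_coe_iff.mpr (by linarith : FB < FB + ε)))
        obtain ⟨mB, q0B, q1B, ρB, hq0B, hq1B, hρB, hcB0, hcB1, hdBeq⟩ := hdB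
        rw [hdBeq] at hdBlt
        have hvalB : (∑ x, q1B x * f (q0B x / q1B x)) < FB + ε := by
          exact_mod_cast hdBlt
        set valA := ∑ x, q1A x * f (q0A x / q1A x) with hvalAdef
        set valB := ∑ x, q1B x * f (q0B x / q1B x) with hvalBdef
        -- the combined representation
        have hle : ((FC : ℝ) : EReal) ≤ ((t * valA + (1 - t) * valB : ℝ) : EReal) := by
          rw [← eqC]
          refine sInf_le ?_
          refine ⟨mA + mB,
            Fin.addCases (fun x => t * q0A x) (fun x => (1 - t) * q0B x),
            Fin.addCases (fun x => t * q1A x) (fun x => (1 - t) * q1B x),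
            Fin.addCases ρA ρB, ?_, ?_, ?_, ?_, ?_, ?_⟩
          · refine Fin.addCases (fun i => ?_) (fun i => ?_)
            · simp only [Fin.addCases_left]
              exact mul_nonneg ht0'.le (hq0A i)
            · simp only [Fin.addCases_right]
              exact mul_nonneg (by linarith) (hq0B i)
          · refine Fin.addCases (fun i => ?_) (fun i => ?_)
            · simp only [Fin.addCases_left]
              exact mul_pos ht0' (hq1A i)
            · simp only [Fin.addCases_right]
              exact mul_pos (by linarith) (hq1B i)
          · refine Fin.addCases (fun i => ?_) (fun i => ?_)
            · simp only [Fin.addCases_left]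
              exact hρA i
            · simp only [Fin.addCases_right]
              exact hρB i
          · rw [cqApply, Fin.sum_univ_add]
            simp only [Fin.addCases_left, Fin.addCases_right]
            have eA : (∑ i : Fin mA, (((t * q0A i : ℝ)) : ℂ) • ρA i) = (t : ℂ) • σA := by
              rw [← hcA0, cqApply, Finset.smul_sum]
              refine Finset.sum_congr rfl fun i _ => ?_
              rw [Complex.ofReal_mul, mul_smul]
            have eB : (∑ i : Fin mB, ((((1 - t) * q0B i : ℝ)) : ℂ) • ρB i)
                = ((1 - t : ℝ) : ℂ) • σB := by
              rw [← hcB0, cqApply, Finset.smul_sum]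
              refine Finset.sum_congr rfl fun i _ => ?_
              rw [Complex.ofReal_mul, mul_smul]
            rw [eA, eB, hsplit, real_smul_matC, real_smul_matC]
          · rw [cqApply, Fin.sum_univ_add]
            simp only [Fin.addCases_left, Fin.addCases_right]
            have eA : (∑ i : Fin mA, (((t * q1A i : ℝ)) : ℂ) • ρA i) = (t : ℂ) • S := by
              rw [← hcA1, cqApply, Finset.smul_sum]
              refine Finset.sum_congr rfl fun i _ => ?_
              rw [Complex.ofReal_mul, mul_smul]
            have eB : (∑ i : Fin mB, ((((1 - t) * q1B i : ℝ)) : ℂ) • ρB i)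
                = ((1 - t : ℝ) : ℂ) • S := by
              rw [← hcB1, cqApply, Finset.smul_sum]
              refine Finset.sum_congr rfl fun i _ => ?_
              rw [Complex.ofReal_mul, mul_smul]
            rw [eA, eB, ← real_smul_matC, ← real_smul_matC, ← add_smul]
            norm_num
          · refine congrArg (fun r : ℝ => (r : EReal)) ?_
            rw [Fin.sum_univ_add]
            simp only [Fin.addCases_left, Fin.addCases_right]
            have eA : (∑ i : Fin mA, t * q1A i * f (t * q0A i / (t * q1A i)))
                = t * valA := by
              rw [hvalAdef, Finset.mul_sum]
              refine Finset.sum_congr rfl fun i _ => ?_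
              rw [mul_div_mul_left _ _ ht0'.ne', mul_assoc]
            have eB : (∑ i : Fin mB, (1 - t) * q1B i * f ((1 - t) * q0B i / ((1 - t) * q1B i)))
                = (1 - t) * valB := by
              rw [hvalBdef, Finset.mul_sum]
              refine Finset.sum_congr rfl fun i _ => ?_
              rw [mul_div_mul_left _ _ (by linarith : (1 : ℝ) - t ≠ 0), mul_assoc]
            rw [eA, eB]
        have hlreal : FC ≤ t * valA + (1 - t) * valB := EReal.coe_le_coe_iff.mp hle
        have e1 : t * valA ≤ t * (FA + ε) := mul_le_mul_of_nonneg_left hvalA.le ht0'.le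
        have e2 : (1 - t) * valB ≤ (1 - t) * (FB + ε) :=
          mul_le_mul_of_nonneg_left hvalB.le (by linarith)
        have e3 : t * (FA + ε) + (1 - t) * (FB + ε) = t * FA + (1 - t) * FB + ε := by ring
        linarith
      by_contra hcon
      push_neg at hcon
      have := bound ((FC - (t * FA + (1 - t) * FB)) / 2) (by linarith)
      linarith
    -- take the limit δ → 0⁺
    have formA := trace_hermCFC_shift f hA S
    have formB := trace_hermCFC_shift f hB S
    have formC := trace_hermCFC_shift f hC S
    have zeroA : (S * hermCFC f A).trace.re
        = ∑ i, ((star (hA.1.eigenvectorUnitary : Matrix (Fin n) (Fin n) ℂ) * S *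
            (hA.1.eigenvectorUnitary : Matrix (Fin n) (Fin n) ℂ)) i i).re
              * f (hA.1.eigenvalues i) := by
      have := formA 0
      simpa using this
    have zeroB : (S * hermCFC f B).trace.re
        = ∑ i, ((star (hB.1.eigenvectorUnitary : Matrix (Fin n) (Fin n) ℂ) * S *
            (hB.1.eigenvectorUnitary : Matrix (Fin n) (Fin n) ℂ)) i i).re
              * f (hB.1.eigenvalues i) := by
      have := formB 0
      simpa using this
    have zeroC : (S * hermCFC f C).trace.re
        = ∑ i, ((star (hC.1.eigenvectorUnitary : Matrix (Fin n) (Fin n) ℂ) * S *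
            (hC.1.eigenvectorUnitary : Matrix (Fin n) (Fin n) ℂ)) i i).re
              * f (hC.1.eigenvalues i) := by
      have := formC 0
      simpa using this
    have tend : ∀ (X : Matrix (Fin n) (Fin n) ℂ) (hX : X.PosSemidef),
        Filter.Tendsto (fun δ : ℝ => (S * hermCFC f (X + δ • 1)).trace.re)
          (nhdsWithin 0 (Set.Ioi 0))
          (nhds (∑ i, ((star (hX.1.eigenvectorUnitary : Matrix (Fin n) (Fin n) ℂ) * S *
            (hX.1.eigenvectorUnitary : Matrix (Fin n) (Fin n) ℂ)) i i).re
              * f (hX.1.eigenvalues i))) := by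
      intro X hX
      have : (fun δ : ℝ => (S * hermCFC f (X + δ • 1)).trace.re)
          = fun δ : ℝ => ∑ i, ((star (hX.1.eigenvectorUnitary : Matrix (Fin n) (Fin n) ℂ) * S *
            (hX.1.eigenvectorUnitary : Matrix (Fin n) (Fin n) ℂ)) i i).re
              * f (hX.1.eigenvalues i + δ) := by
        funext δ
        exact trace_hermCFC_shift f hX S δ
      rw [this]
      refine tendsto_finset_sum _ fun i _ => ?_
      refine Filter.Tendsto.const_mul _ ?_
      have hcont : ContinuousWithinAt f (Set.Ici 0) (hX.1.eigenvalues i) :=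
        hf.continuousWithinAt (Set.mem_Ici.mpr (hX.eigenvalues_nonneg i))
      have hmap : Filter.Tendsto (fun δ : ℝ => hX.1.eigenvalues i + δ)
          (nhdsWithin 0 (Set.Ioi 0)) (nhdsWithin (hX.1.eigenvalues i) (Set.Ici 0)) := by
        apply tendsto_nhdsWithin_of_tendsto_nhds_of_eventually_within
        · have h1 : Filter.Tendsto (fun δ : ℝ => hX.1.eigenvalues i + δ)
              (nhds 0) (nhds (hX.1.eigenvalues i)) := by
            have := (tendsto_const_nhds (x := hX.1.eigenvalues i)
              (f := nhds (0:ℝ))).add (Filter.tendsto_id (x := nhds (0:ℝ)))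
            simpa using this
          exact h1.mono_left nhdsWithin_le_nhds
        · filter_upwards [self_mem_nhdsWithin] with δ hδ
          exact add_nonneg (hX.eigenvalues_nonneg i) (le_of_lt hδ)
      exact hcont.tendsto.comp hmap
    rw [zeroA, zeroB, zeroC]
    refine le_of_tendsto_of_tendsto (tend C hC) (((tend A hA).const_mul t).add
      ((tend B hB).const_mul (1 - t))) ?_
    filter_upwards [self_mem_nhdsWithin] with δ hδ
    exact key δ hδ
  -- deduce the Loewner inequality from the trace inequalities
  have hfAH : (hermCFC f A).IsHermitian := hermCFC_isHermitian f hA.1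
  have hfBH : (hermCFC f B).IsHermitian := hermCFC_isHermitian f hB.1
  have hfCH : (hermCFC f C).IsHermitian := hermCFC_isHermitian f hC.1
  have hDH : (t • hermCFC f A + (1 - t) • hermCFC f B - hermCFC f C).IsHermitian := by
    have h1 : (t • hermCFC f A).IsHermitian := by
      rw [Matrix.IsHermitian, Matrix.conjTranspose_smul, star_trivial, hfAH.eq]
    have h2 : ((1 - t) • hermCFC f B).IsHermitian := by
      rw [Matrix.IsHermitian, Matrix.conjTranspose_smul, star_trivial, hfBH.eq]
    exact (h1.add h2).sub hfCH
  refine Matrix.PosSemidef.of_dotProduct_mulVec_nonneg hDH fun x => ?_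
  set DD := t • hermCFC f A + (1 - t) • hermCFC f B - hermCFC f C with hDDdef
  set z := star x ⬝ᵥ DD *ᵥ x with hzdef
  have him : z.im = 0 := by
    have hst := quad_form_star hDH x
    rw [← hzdef] at hst
    rw [Complex.star_def] at hst
    exact Complex.conj_eq_iff_im.mp hst
  have hzre : z.re = t * (star x ⬝ᵥ hermCFC f A *ᵥ x).re
      + (1 - t) * (star x ⬝ᵥ hermCFC f B *ᵥ x).re
      - (star x ⬝ᵥ hermCFC f C *ᵥ x).re := by
    rw [hzdef, hDDdef]
    rw [Matrix.sub_mulVec, Matrix.add_mulVec, dotProduct_sub, dotProduct_add,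
      real_smul_matC t, real_smul_matC (1 - t), Matrix.smul_mulVec,
      Matrix.smul_mulVec, dotProduct_smul, dotProduct_smul]
    simp [Complex.sub_re, Complex.add_re, smul_eq_mul, Complex.mul_re,
      Complex.ofReal_re, Complex.ofReal_im]
  set K := t * (hermCFC f A).trace.re + (1 - t) * (hermCFC f B).trace.re
      - (hermCFC f C).trace.re with hKdef
  have hb : ∀ ε : ℝ, 0 < ε → 0 ≤ z.re + ε * K := by
    intro ε hε
    have hSpd : (Matrix.vecMulVec x (star x) + ε • 1).PosDef :=
      Matrix.PosDef.posSemidef_add (vecMulVec_psd x) (smul_one_pd hε)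
    have hineq := MAIN _ hSpd
    have expand : ∀ X : Matrix (Fin n) (Fin n) ℂ,
        ((Matrix.vecMulVec x (star x) + ε • 1) * X).trace.re
          = (star x ⬝ᵥ X *ᵥ x).re + ε * X.trace.re := by
      intro X
      rw [Matrix.add_mul, Matrix.trace_add, Complex.add_re, trace_vecMulVec_mul]
      congr 1
      rw [real_smul_matC, smul_mul_assoc, one_mul, Matrix.trace_smul, smul_eq_mul,
        Complex.mul_re]
      simp
    simp only [expand] at hineq
    have e : z.re + ε * K
        = (t * ((star x ⬝ᵥ hermCFC f A *ᵥ x).re + ε * (hermCFC f A).trace.re)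
            + (1 - t) * ((star x ⬝ᵥ hermCFC f B *ᵥ x).re + ε * (hermCFC f B).trace.re))
          - ((star x ⬝ᵥ hermCFC f C *ᵥ x).re + ε * (hermCFC f C).trace.re) := by
      rw [hzre, hKdef]; ring
    rw [e]
    linarith
  have hre : 0 ≤ z.re := by
    by_contra hneg
    push_neg at hneg
    have hεpos : 0 < -z.re / (2 * (|K| + 1)) := by
      apply div_pos (by linarith)
      positivity
    have hb' := hb _ hεpos
    have h1 : (-z.re / (2 * (|K| + 1))) * K ≤ (-z.re / (2 * (|K| + 1))) * (|K| + 1) :=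
      mul_le_mul_of_nonneg_left (by linarith [le_abs_self K]) hεpos.le
    have h2 : (-z.re / (2 * (|K| + 1))) * (|K| + 1) = -z.re / 2 := by
      have hne : |K| + 1 ≠ 0 := by positivity
      field_simp
    linarith
  show (0 : ℂ) ≤ z
  rw [Complex.le_def]
  constructor
  · simpa using hre
  · simp [him]
end

section
/- There exist probability vectors p and q on a three-element set X such that, with u the uniform probability vector on X, the inequality Σ_{x∈X} u(x)·f(p(x)/u(x)) ≥ Σ_{x∈X} u(x)·f(q(x)/u(x)) holds for every operator convex continuous function f : [0,∞) → ℝ, and yet there is no stochastic matrix P from X to X with Pp = q and Pu = u. -/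
open Matrix
open scoped Kronecker ComplexOrder

set_option maxHeartbeats 1600000

open Polynomial in
private lemma aux_aeval_conj_unitary {n : ℕ} (V M : Matrix (Fin n) (Fin n) ℂ)
    (h1 : star V * V = 1) (h2 : V * star V = 1) (p : ℂ[X]) :
    aeval (V * M * star V) p = V * (aeval M p) * star V := by
  induction p using Polynomial.induction_on' with
  | add p q hp hq => rw [map_add, hp, hq, map_add, Matrix.mul_add, Matrix.add_mul]
  | monomial m a =>
    have hpow : ∀ k : ℕ, (V * M * star V) ^ k = V * M ^ k * star V := by
      intro k; induction k with
      | zero => simpa [pow_zero] using h2.symm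
      | succ k ih =>
        calc (V * M * star V) ^ (k+1) = (V * M ^ k * star V) * (V * M * star V) := by
              rw [pow_succ, ih]
          _ = V * (M ^ k * ((star V * V) * (M * star V))) := by
              simp only [Matrix.mul_assoc]
          _ = V * (M ^ k * (M * star V)) := by rw [h1, Matrix.one_mul]
          _ = V * M ^ (k+1) * star V := by rw [pow_succ]; simp only [Matrix.mul_assoc]
    rw [aeval_monomial, aeval_monomial, hpow, ← Algebra.smul_def, ← Algebra.smul_def,
      Matrix.mul_smul, Matrix.smul_mul]

open Polynomial in
private lemma aux_aeval_sum_proj {n r : ℕ} (γ : Fin r → ℂ)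
    (P : Fin r → Matrix (Fin n) (Fin n) ℂ)
    (hP1 : ∑ j, P j = 1)
    (hP2 : ∀ i j, P i * P j = if i = j then P i else 0) (p : ℂ[X]) :
    aeval (∑ j, γ j • P j) p = ∑ j, (p.eval (γ j)) • P j := by
  have hpow : ∀ k : ℕ, (∑ j, γ j • P j) ^ k = ∑ j, (γ j) ^ k • P j := by
    intro k; induction k with
    | zero => simpa using hP1.symm
    | succ k ih =>
      rw [pow_succ, ih, Finset.sum_mul_sum]
      have hterm : ∀ i ∈ Finset.univ, ∀ j ∈ Finset.univ,
          ((γ i) ^ k • P i) * (γ j • P j) = if i = j then ((γ i)^(k+1) • P i) else 0 := by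
        intro i _ j _
        rw [Matrix.smul_mul, Matrix.mul_smul, hP2 i j, smul_smul]
        by_cases h : i = j
        · subst h; simp [pow_succ, mul_comm]
        · simp [h]
      calc (∑ i, ∑ j, ((γ i) ^ k • P i) * (γ j • P j))
          = ∑ i, ∑ j, if i = j then ((γ i)^(k+1) • P i) else 0 :=
            Finset.sum_congr rfl fun i hi => Finset.sum_congr rfl fun j hj => hterm i hi j hj
        _ = ∑ i, (γ i)^(k+1) • P i := Finset.sum_congr rfl fun i _ => by simp
  induction p using Polynomial.induction_on' with
  | add p q hp hq =>
    rw [map_add, hp, hq, ← Finset.sum_add_distrib]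
    exact Finset.sum_congr rfl fun j _ => by rw [eval_add, add_smul]
  | monomial m a =>
    rw [aeval_monomial, hpow, ← Algebra.smul_def, Finset.smul_sum]
    exact Finset.sum_congr rfl fun j _ => by rw [eval_monomial, smul_smul]

open Polynomial in
private lemma aux_hermCFC_eq_sum_proj {n r : ℕ} (f : ℝ → ℝ) {A : Matrix (Fin n) (Fin n) ℂ}
    (hA : A.IsHermitian) (γ : Fin r → ℝ) (P : Fin r → Matrix (Fin n) (Fin n) ℂ)
    (hP1 : ∑ j, P j = 1)
    (hP2 : ∀ i j, P i * P j = if i = j then P i else 0)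
    (hdec : A = ∑ j, (γ j : ℂ) • P j) :
    hermCFC f A = ∑ j, (f (γ j) : ℂ) • P j := by
  classical
  set s : Finset ℝ := (Finset.image hA.eigenvalues Finset.univ ∪ Finset.image γ Finset.univ)
    with hs
  have hmem1 : ∀ i, hA.eigenvalues i ∈ s := fun i => by
    simp [hs, Finset.mem_union, Finset.mem_image]
  have hmem2 : ∀ j, γ j ∈ s := fun j => by
    simp [hs, Finset.mem_union, Finset.mem_image]
  set g : ℝ[X] := Lagrange.interpolate s id f with hgdef
  have hgev : ∀ x ∈ s, g.eval x = f x := by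
    intro x hx
    have := Lagrange.eval_interpolate_at_node (v := id) (r := f) (Set.injOn_id _) hx
    exact this
  set gc : ℂ[X] := g.map (algebraMap ℝ ℂ) with hgc
  have hevc : ∀ x : ℝ, x ∈ s → gc.eval (x : ℂ) = (f x : ℂ) := by
    intro x hx
    have e1 : gc.eval (x : ℂ) = aeval (x : ℂ) gc := rfl
    rw [e1, hgc, aeval_map_algebraMap]
    have e2 : ((x : ℂ)) = algebraMap ℝ ℂ x := rfl
    rw [e2, aeval_algebraMap_apply_eq_algebraMap_eval, hgev x hx]
    rfl
  have key1 : aeval A gc = ∑ j, (f (γ j) : ℂ) • P j := by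
    rw [hdec, aux_aeval_sum_proj _ _ hP1 hP2]
    exact Finset.sum_congr rfl fun j _ => by rw [hevc _ (hmem2 j)]
  have hrw : ∀ i, (RCLike.ofReal ∘ hA.eigenvalues) i = ((hA.eigenvalues i : ℝ) : ℂ) :=
    fun i => rfl
  have key2 : aeval A gc = hermCFC f A := by
    have hu1 : star ((hA.eigenvectorUnitary : Matrix (Fin n) (Fin n) ℂ))
        * (hA.eigenvectorUnitary : Matrix (Fin n) (Fin n) ℂ) = 1 :=
      Matrix.mem_unitaryGroup_iff'.mp hA.eigenvectorUnitary.2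
    have hu2 : (hA.eigenvectorUnitary : Matrix (Fin n) (Fin n) ℂ)
        * star ((hA.eigenvectorUnitary : Matrix (Fin n) (Fin n) ℂ)) = 1 :=
      Matrix.mem_unitaryGroup_iff.mp hA.eigenvectorUnitary.2
    conv_lhs => rw [hA.spectral_theorem, Unitary.conjStarAlgAut_apply]
    rw [aux_aeval_conj_unitary _ _ hu1 hu2]
    have hdiag : aeval (Matrix.diagonal (RCLike.ofReal ∘ hA.eigenvalues) :
        Matrix (Fin n) (Fin n) ℂ) gc
        = Matrix.diagonal (fun i => (f (hA.eigenvalues i) : ℂ)) := by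
      have h1 : (Matrix.diagonal (RCLike.ofReal ∘ hA.eigenvalues) : Matrix (Fin n) (Fin n) ℂ)
          = Matrix.diagonalAlgHom ℂ (RCLike.ofReal ∘ hA.eigenvalues) := rfl
      rw [h1, aeval_algHom_apply]
      have h3 : (aeval (RCLike.ofReal ∘ hA.eigenvalues) gc : Fin n → ℂ)
          = fun i => (f (hA.eigenvalues i) : ℂ) := by
        funext i
        have h2 := aeval_algHom_apply (Pi.evalAlgHom ℂ (fun _ => ℂ) i)
          (RCLike.ofReal ∘ hA.eigenvalues) gc
        have h5 : aeval (RCLike.ofReal ∘ hA.eigenvalues) gc i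
            = gc.eval ((hA.eigenvalues i : ℝ) : ℂ) := h2.symm
        rw [h5]
        exact hevc _ (hmem1 i)
      rw [h3]
      rfl
    rw [hdiag, hermCFC, dif_pos hA]
  rw [← key2, key1]

private lemma aux_psd_add {n : ℕ} {A B : Matrix (Fin n) (Fin n) ℂ}
    (hA : A.PosSemidef) (hB : B.PosSemidef) : (A + B).PosSemidef := by
  exact hA.add hB

private lemma aux_psd_real_smul {n : ℕ} {c : ℝ} (hc : 0 ≤ c) {A : Matrix (Fin n) (Fin n) ℂ}
    (hA : A.PosSemidef) : ((c : ℂ) • A).PosSemidef := by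
  constructor
  · unfold Matrix.IsHermitian
    rw [Matrix.conjTranspose_smul, Complex.star_def, Complex.conj_ofReal, hA.1.eq]
  · exact (hA.smul (a := (c : ℂ)) (Complex.zero_le_real.mpr hc)).2

private lemma aux_psd_of_proj {n : ℕ} {P : Matrix (Fin n) (Fin n) ℂ}
    (hPh : P.IsHermitian) (hPi : P * P = P) : P.PosSemidef := by
  have h : Pᴴ * P = P := by rw [hPh.eq, hPi]
  exact h ▸ Matrix.posSemidef_conjTranspose_mul_self P

private lemma aux_isHermitian_sum_proj {n r : ℕ} (γ : Fin r → ℝ)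
    (P : Fin r → Matrix (Fin n) (Fin n) ℂ) (hPh : ∀ j, (P j).IsHermitian) :
    (∑ j, (γ j : ℂ) • P j).IsHermitian := by
  unfold Matrix.IsHermitian
  rw [Matrix.conjTranspose_sum]
  refine Finset.sum_congr rfl fun j _ => ?_
  rw [Matrix.conjTranspose_smul, Complex.star_def, Complex.conj_ofReal, (hPh j).eq]

private lemma aux_posSemidef_sum_proj {n r : ℕ} (γ : Fin r → ℝ)
    (P : Fin r → Matrix (Fin n) (Fin n) ℂ) (hγ : ∀ j, 0 ≤ γ j)
    (hPh : ∀ j, (P j).IsHermitian) (hPi : ∀ j, P j * P j = P j) :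
    (∑ j, (γ j : ℂ) • P j).PosSemidef := by
  classical
  have hterm : ∀ j : Fin r, ((γ j : ℂ) • P j).PosSemidef := fun j =>
    aux_psd_real_smul (hγ j) (aux_psd_of_proj (hPh j) (hPi j))
  have hgen : ∀ (s : Finset (Fin r)), (∑ j ∈ s, (γ j : ℂ) • P j).PosSemidef := by
    intro s
    induction s using Finset.induction_on with
    | empty =>
      simp only [Finset.sum_empty]
      exact ⟨Matrix.isHermitian_zero, fun x => by simp⟩
    | insert _ _ hnot ih =>
      rw [Finset.sum_insert hnot]
      exact aux_psd_add (hterm _) ih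
  exact hgen Finset.univ

private lemma aux_oc_convex {f : ℝ → ℝ} (hOC : OperatorConvex f) {x y t : ℝ}
    (hx : 0 ≤ x) (hy : 0 ≤ y) (ht0 : 0 ≤ t) (ht1 : t ≤ 1) :
    f (t * x + (1 - t) * y) ≤ t * f x + (1 - t) * f y := by
  have hdec : ∀ z : ℝ, ((z : ℂ) • (1 : Matrix (Fin 1) (Fin 1) ℂ))
      = ∑ j : Fin 1, ((![z]) j : ℂ) • (![(1 : Matrix (Fin 1) (Fin 1) ℂ)]) j := by
    intro z; simp
  have hcfc : ∀ z : ℝ, hermCFC f ((z : ℂ) • (1 : Matrix (Fin 1) (Fin 1) ℂ))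
      = (f z : ℂ) • (1 : Matrix (Fin 1) (Fin 1) ℂ) := by
    intro z
    have hA : ((z : ℂ) • (1 : Matrix (Fin 1) (Fin 1) ℂ)).IsHermitian := by
      rw [hdec z]
      exact aux_isHermitian_sum_proj _ _
        (fun j => by fin_cases j; exact Matrix.isHermitian_one)
    have := aux_hermCFC_eq_sum_proj f hA ![z] ![(1 : Matrix (Fin 1) (Fin 1) ℂ)] (by simp)
      (fun i j => by fin_cases i; fin_cases j; simp) (hdec z)
    rw [this]; simp
  have hpsd : ∀ z : ℝ, 0 ≤ z → ((z : ℂ) • (1 : Matrix (Fin 1) (Fin 1) ℂ)).PosSemidef :=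
    fun z hz => aux_psd_real_smul hz Matrix.PosSemidef.one
  have hmix : t • ((x : ℂ) • (1 : Matrix (Fin 1) (Fin 1) ℂ))
      + (1 - t) • ((y : ℂ) • (1 : Matrix (Fin 1) (Fin 1) ℂ))
      = ((t * x + (1 - t) * y : ℝ) : ℂ) • (1 : Matrix (Fin 1) (Fin 1) ℂ) := by
    rw [← smul_assoc, ← smul_assoc, ← add_smul]
    congr 1
    push_cast
    simp [Complex.real_smul]
  have key := hOC 1 _ _ (hpsd x hx) (hpsd y hy) t ht0 ht1
  rw [hmix, hcfc, hcfc, hcfc] at key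
  have hval := key.dotProduct_mulVec_nonneg ![1]
  have hcomp : star (![(1:ℂ)]) ⬝ᵥ
      ((t • (f x : ℂ) • (1 : Matrix (Fin 1) (Fin 1) ℂ)
        + (1 - t) • (f y : ℂ) • (1 : Matrix (Fin 1) (Fin 1) ℂ)
        - (f (t * x + (1 - t) * y) : ℂ) • (1 : Matrix (Fin 1) (Fin 1) ℂ)) *ᵥ ![(1:ℂ)])
      = ((t * f x + (1 - t) * f y - f (t * x + (1 - t) * y) : ℝ) : ℂ) := by
    simp [dotProduct, Matrix.mulVec, Fin.sum_univ_one, Matrix.one_apply,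
      Matrix.smul_apply, Matrix.sub_apply, Matrix.add_apply, Complex.real_smul]
  rw [hcomp] at hval
  have := Complex.zero_le_real.mp hval
  linarith

private noncomputable def auxPX : Fin 3 → Matrix (Fin 3) (Fin 3) ℂ :=
  ![!![1,0,0;0,0,0;0,0,0], !![0,0,0;0,1,0;0,0,0], !![0,0,0;0,0,0;0,0,1]]

private noncomputable def auxPY : Fin 3 → Matrix (Fin 3) (Fin 3) ℂ :=
  ![!![0,0,0;0,16/25,-12/25;0,-12/25,9/25], !![0,0,0;0,9/25,12/25;0,12/25,16/25],
    !![1,0,0;0,0,0;0,0,0]]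

private noncomputable def auxPC : Fin 3 → Matrix (Fin 3) (Fin 3) ℂ :=
  ![!![0,0,0;0,1/10,3/10;0,3/10,9/10], !![1,0,0;0,0,0;0,0,0],
    !![0,0,0;0,9/10,-3/10;0,-3/10,1/10]]

private noncomputable def auxgX : Fin 3 → ℝ := ![5/2, 5/4, 0]
private noncomputable def auxgC : Fin 3 → ℝ := ![3/4, 5/4, 7/4]

private noncomputable def auxXM : Matrix (Fin 3) (Fin 3) ℂ := !![5/2,0,0;0,5/4,0;0,0,0]
private noncomputable def auxYM : Matrix (Fin 3) (Fin 3) ℂ :=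
  !![0,0,0;0,41/20,-3/5;0,-3/5,17/10]
private noncomputable def auxCM : Matrix (Fin 3) (Fin 3) ℂ :=
  !![5/4,0,0;0,33/20,-3/10;0,-3/10,17/20]

private lemma aux_hPX1 : ∑ j, auxPX j = 1 := by
  ext a b
  fin_cases a <;> fin_cases b <;>
    simp [auxPX, Fin.sum_univ_three, Matrix.one_apply, Matrix.vecHead, Matrix.vecTail]

private lemma aux_hPX2 : ∀ i j, auxPX i * auxPX j = if i = j then auxPX i else 0 := by
  intro i j
  fin_cases i <;> fin_cases j <;>
    · ext a b
      fin_cases a <;> fin_cases b <;>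
        · simp [auxPX, Matrix.mul_apply, Fin.sum_univ_three, Matrix.vecHead, Matrix.vecTail,
            Matrix.zero_apply]
          try norm_num

private lemma aux_hPXh : ∀ j, (auxPX j).IsHermitian := by
  intro j
  unfold Matrix.IsHermitian
  fin_cases j <;>
    · ext a b
      fin_cases a <;> fin_cases b <;>
        · simp [auxPX, Matrix.conjTranspose_apply, Matrix.vecHead, Matrix.vecTail]
          try norm_num

private lemma aux_hdecX : auxXM = ∑ j, (auxgX j : ℂ) • auxPX j := by
  ext a b
  fin_cases a <;> fin_cases b <;>
    · simp [auxXM, auxgX, auxPX, Fin.sum_univ_three, Matrix.vecHead, Matrix.vecTail]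
      try norm_num

private lemma aux_hPY1 : ∑ j, auxPY j = 1 := by
  ext a b
  fin_cases a <;> fin_cases b <;>
    simp [auxPY, Fin.sum_univ_three, Matrix.one_apply, Matrix.vecHead, Matrix.vecTail] <;>
    norm_num

private lemma aux_hPY2 : ∀ i j, auxPY i * auxPY j = if i = j then auxPY i else 0 := by
  intro i j
  fin_cases i <;> fin_cases j <;>
    · ext a b
      fin_cases a <;> fin_cases b <;>
        · simp [auxPY, Matrix.mul_apply, Fin.sum_univ_three, Matrix.vecHead, Matrix.vecTail,
            Matrix.zero_apply]
          try norm_num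

private lemma aux_hPYh : ∀ j, (auxPY j).IsHermitian := by
  intro j
  unfold Matrix.IsHermitian
  fin_cases j <;>
    · ext a b
      fin_cases a <;> fin_cases b <;>
        · simp [auxPY, Matrix.conjTranspose_apply, Matrix.vecHead, Matrix.vecTail]
          try norm_num

private lemma aux_hdecY : auxYM = ∑ j, (auxgX j : ℂ) • auxPY j := by
  ext a b
  fin_cases a <;> fin_cases b <;>
    · simp [auxYM, auxgX, auxPY, Fin.sum_univ_three, Matrix.vecHead, Matrix.vecTail]
      try norm_num

private lemma aux_hPC1 : ∑ j, auxPC j = 1 := by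
  ext a b
  fin_cases a <;> fin_cases b <;>
    simp [auxPC, Fin.sum_univ_three, Matrix.one_apply, Matrix.vecHead, Matrix.vecTail] <;>
    norm_num

private lemma aux_hPC2 : ∀ i j, auxPC i * auxPC j = if i = j then auxPC i else 0 := by
  intro i j
  fin_cases i <;> fin_cases j <;>
    · ext a b
      fin_cases a <;> fin_cases b <;>
        · simp [auxPC, Matrix.mul_apply, Fin.sum_univ_three, Matrix.vecHead, Matrix.vecTail,
            Matrix.zero_apply]
          try norm_num

private lemma aux_hPCh : ∀ j, (auxPC j).IsHermitian := by
  intro j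
  unfold Matrix.IsHermitian
  fin_cases j <;>
    · ext a b
      fin_cases a <;> fin_cases b <;>
        · simp [auxPC, Matrix.conjTranspose_apply, Matrix.vecHead, Matrix.vecTail]
          try norm_num

private lemma aux_hCM : (1/2 : ℝ) • auxXM + (1 - (1/2 : ℝ)) • auxYM = auxCM := by
  have h1 : ((1:ℝ) - 1/2) = (1/2 : ℝ) := by norm_num
  rw [h1]
  ext a b
  rw [Matrix.add_apply, Matrix.smul_apply, Matrix.smul_apply, Complex.real_smul,
    Complex.real_smul]
  fin_cases a <;> fin_cases b <;>
    · simp [auxXM, auxYM, auxCM, Matrix.vecHead, Matrix.vecTail]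
      try norm_num

private lemma aux_hdecC :
    (1/2 : ℝ) • auxXM + (1 - (1/2 : ℝ)) • auxYM = ∑ j, (auxgC j : ℂ) • auxPC j := by
  rw [aux_hCM]
  ext a b
  fin_cases a <;> fin_cases b <;>
    · simp [auxCM, auxgC, auxPC, Fin.sum_univ_three, Matrix.vecHead, Matrix.vecTail]
      try norm_num

private lemma aux_gXnn : ∀ j, 0 ≤ auxgX j := by
  intro j; fin_cases j <;> norm_num [auxgX]

private lemma aux_quantum_step {f : ℝ → ℝ} (hOC : OperatorConvex f) :
    (45/2) * f (3/4) + (5/2) * f (7/4) ≤ 17 * f (5/4) + 8 * f 0 := by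
  have hXH : auxXM.IsHermitian := by
    rw [aux_hdecX]; exact aux_isHermitian_sum_proj _ _ aux_hPXh
  have hYH : auxYM.IsHermitian := by
    rw [aux_hdecY]; exact aux_isHermitian_sum_proj _ _ aux_hPYh
  have hCH : ((1/2 : ℝ) • auxXM + (1 - (1/2 : ℝ)) • auxYM).IsHermitian := by
    rw [aux_hdecC]; exact aux_isHermitian_sum_proj _ _ aux_hPCh
  have hfX := aux_hermCFC_eq_sum_proj f hXH auxgX auxPX aux_hPX1 aux_hPX2 aux_hdecX
  have hfY := aux_hermCFC_eq_sum_proj f hYH auxgX auxPY aux_hPY1 aux_hPY2 aux_hdecY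
  have hfC := aux_hermCFC_eq_sum_proj f hCH auxgC auxPC aux_hPC1 aux_hPC2 aux_hdecC
  have hsX : (∑ j, (f (auxgX j) : ℂ) • auxPX j)
      = !![((f (5/2) : ℝ) : ℂ),0,0; 0,((f (5/4) : ℝ) : ℂ),0; 0,0,((f 0 : ℝ) : ℂ)] := by
    ext a b
    simp only [Fin.sum_univ_three, Matrix.add_apply, Matrix.smul_apply, auxgX, auxPX,
      Matrix.cons_val_zero, Matrix.cons_val_one, Matrix.head_cons, Matrix.cons_val_two,
      Matrix.tail_cons, smul_eq_mul]
    fin_cases a <;> fin_cases b <;>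
      · simp [Matrix.vecHead, Matrix.vecTail]
        try push_cast
        try ring
  have hsY : (∑ j, (f (auxgX j) : ℂ) • auxPY j)
      = !![((f 0 : ℝ) : ℂ),0,0;
          0, ((16/25*f (5/2) + 9/25*f (5/4) : ℝ) : ℂ),
            ((-12/25*f (5/2) + 12/25*f (5/4) : ℝ) : ℂ);
          0, ((-12/25*f (5/2) + 12/25*f (5/4) : ℝ) : ℂ),
            ((9/25*f (5/2) + 16/25*f (5/4) : ℝ) : ℂ)] := by
    ext a b
    simp only [Fin.sum_univ_three, Matrix.add_apply, Matrix.smul_apply, auxgX, auxPY,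
      Matrix.cons_val_zero, Matrix.cons_val_one, Matrix.head_cons, Matrix.cons_val_two,
      Matrix.tail_cons, smul_eq_mul]
    fin_cases a <;> fin_cases b <;>
      · simp [Matrix.vecHead, Matrix.vecTail]
        try push_cast
        try ring
  have hsC : (∑ j, (f (auxgC j) : ℂ) • auxPC j)
      = !![((f (5/4) : ℝ) : ℂ),0,0;
          0, ((1/10*f (3/4) + 9/10*f (7/4) : ℝ) : ℂ),
            ((3/10*f (3/4) - 3/10*f (7/4) : ℝ) : ℂ);
          0, ((3/10*f (3/4) - 3/10*f (7/4) : ℝ) : ℂ),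
            ((9/10*f (3/4) + 1/10*f (7/4) : ℝ) : ℂ)] := by
    ext a b
    simp only [Fin.sum_univ_three, Matrix.add_apply, Matrix.smul_apply, auxgC, auxPC,
      Matrix.cons_val_zero, Matrix.cons_val_one, Matrix.head_cons, Matrix.cons_val_two,
      Matrix.tail_cons, smul_eq_mul]
    fin_cases a <;> fin_cases b <;>
      · simp [Matrix.vecHead, Matrix.vecTail]
        try push_cast
        try ring
  have hXpsd : auxXM.PosSemidef := by
    rw [aux_hdecX]
    exact aux_posSemidef_sum_proj _ _ aux_gXnn aux_hPXh (fun j => by simpa using aux_hPX2 j j)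
  have hYpsd : auxYM.PosSemidef := by
    rw [aux_hdecY]
    exact aux_posSemidef_sum_proj _ _ aux_gXnn aux_hPYh (fun j => by simpa using aux_hPY2 j j)
  have key := hOC 3 auxXM auxYM hXpsd hYpsd (1/2) (by norm_num) (by norm_num)
  rw [hfX, hfY, hfC, hsX, hsY, hsC] at key
  have hval := key.dotProduct_mulVec_nonneg (![(0:ℂ), 3, 4])
  have hcomp : star (![(0:ℂ), 3, 4]) ⬝ᵥ
      (((1/2 : ℝ) • !![((f (5/2) : ℝ) : ℂ),0,0; 0,((f (5/4) : ℝ) : ℂ),0; 0,0,((f 0 : ℝ) : ℂ)]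
        + (1 - (1/2 : ℝ)) • !![((f 0 : ℝ) : ℂ),0,0;
          0, ((16/25*f (5/2) + 9/25*f (5/4) : ℝ) : ℂ),
            ((-12/25*f (5/2) + 12/25*f (5/4) : ℝ) : ℂ);
          0, ((-12/25*f (5/2) + 12/25*f (5/4) : ℝ) : ℂ),
            ((9/25*f (5/2) + 16/25*f (5/4) : ℝ) : ℂ)]
        - !![((f (5/4) : ℝ) : ℂ),0,0;
          0, ((1/10*f (3/4) + 9/10*f (7/4) : ℝ) : ℂ),
            ((3/10*f (3/4) - 3/10*f (7/4) : ℝ) : ℂ);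
          0, ((3/10*f (3/4) - 3/10*f (7/4) : ℝ) : ℂ),
            ((9/10*f (3/4) + 1/10*f (7/4) : ℝ) : ℂ)])
        *ᵥ ![(0:ℂ), 3, 4])
      = ((17 * f (5/4) + 8 * f 0 - (45/2) * f (3/4) - (5/2) * f (7/4) : ℝ) : ℂ) := by
    simp [dotProduct, Matrix.mulVec, Fin.sum_univ_three, Matrix.smul_apply,
      Matrix.add_apply, Matrix.sub_apply, Matrix.vecHead, Matrix.vecTail, Complex.real_smul,
      map_ofNat]
    push_cast
    ring
  rw [hcomp] at hval
  have := Complex.zero_le_real.mp hval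
  linarith


/-- There are probability vectors `p`, `q` on a three-point set
such that all operator convex `f`-divergences with respect to the uniform
distribution `u` are monotone from `(p,u)` to `(q,u)`, yet no stochastic matrix
maps `p ↦ q` and `u ↦ u`. -/
theorem operatorConvex_divergences_not_sufficient :
    ∃ p q : Fin 3 → ℝ, ProbVec p ∧ ProbVec q ∧
      (∀ f : ℝ → ℝ, ContinuousOn f (Set.Ici 0) → OperatorConvex f →
        ∑ x, (1 / 3 : ℝ) * f (q x / (1 / 3)) ≤
          ∑ x, (1 / 3 : ℝ) * f (p x / (1 / 3))) ∧
      ¬ ∃ P : Fin 3 → Fin 3 → ℝ, IsStochastic P ∧ stocApply P p = q ∧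
          stocApply P (fun _ => (1 / 3 : ℝ)) = fun _ => (1 / 3 : ℝ) := by
  refine ⟨![31/60, 29/60, 0], ![8/15, 7/30, 7/30], ?_, ?_, ?_, ?_⟩
  · constructor
    · intro x; fin_cases x <;> norm_num
    · simp [Fin.sum_univ_three]; norm_num
  · constructor
    · intro x; fin_cases x <;> norm_num
    · simp [Fin.sum_univ_three]; norm_num
  · intro f _ hOC
    have hQ := aux_quantum_step hOC
    have hC1 : f (7/10) ≤ (1/15) * f 0 + (1 - 1/15) * f (3/4) := by
      have h := aux_oc_convex hOC (x := 0) (y := 3/4) (t := 1/15)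
        (by norm_num) (by norm_num) (by norm_num) (by norm_num)
      have harg : (1/15 : ℝ) * 0 + (1 - 1/15) * (3/4) = 7/10 := by norm_num
      rw [harg] at h
      exact h
    have hC2 : f (8/5) ≤ (3/4) * f (31/20) + (1 - 3/4) * f (7/4) := by
      have h := aux_oc_convex hOC (x := 31/20) (y := 7/4) (t := 3/4)
        (by norm_num) (by norm_num) (by norm_num) (by norm_num)
      have harg : (3/4 : ℝ) * (31/20) + (1 - 3/4) * (7/4) = 8/5 := by norm_num
      rw [harg] at h
      exact h
    have hC3a : f (23/36) ≤ (4/27) * f 0 + (1 - 4/27) * f (3/4) := by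
      have h := aux_oc_convex hOC (x := 0) (y := 3/4) (t := 4/27)
        (by norm_num) (by norm_num) (by norm_num) (by norm_num)
      have harg : (4/27 : ℝ) * 0 + (1 - 4/27) * (3/4) = 23/36 := by norm_num
      rw [harg] at h
      exact h
    have hC3b : f (147/100) ≤ (4/5) * f (29/20) + (1 - 4/5) * f (31/20) := by
      have h := aux_oc_convex hOC (x := 29/20) (y := 31/20) (t := 4/5)
        (by norm_num) (by norm_num) (by norm_num) (by norm_num)
      have harg : (4/5 : ℝ) * (29/20) + (1 - 4/5) * (31/20) = 147/100 := by norm_num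
      rw [harg] at h
      exact h
    have hC3c : f (5/4) ≤ (9/34) * f (23/36) + (1 - 9/34) * f (147/100) := by
      have h := aux_oc_convex hOC (x := 23/36) (y := 147/100) (t := 9/34)
        (by norm_num) (by norm_num) (by norm_num) (by norm_num)
      have harg : (9/34 : ℝ) * (23/36) + (1 - 9/34) * (147/100) = 5/4 := by norm_num
      rw [harg] at h
      exact h
    have hargs : ((8:ℝ)/15) / (1/3) = 8/5 ∧ ((7:ℝ)/30) / (1/3) = 7/10 ∧
        ((31:ℝ)/60) / (1/3) = 31/20 ∧ ((29:ℝ)/60) / (1/3) = 29/20 ∧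
        ((0:ℝ)) / (1/3) = 0 := by norm_num
    obtain ⟨e1, e2, e3, e4, e5⟩ := hargs
    calc ∑ x, (1 / 3 : ℝ) * f ((![8/15, 7/30, 7/30]) x / (1 / 3))
        = (1/3) * f (8/5) + (1/3) * f (7/10) + (1/3) * f (7/10) := by
          rw [Fin.sum_univ_three]
          simp only [Matrix.cons_val_zero, Matrix.cons_val_one, Matrix.head_cons,
            Matrix.cons_val_two, Matrix.tail_cons]
          rw [e1, e2]
      _ ≤ (1/3) * f (31/20) + (1/3) * f (29/20) + (1/3) * f 0 := by linarith
      _ = ∑ x, (1 / 3 : ℝ) * f ((![31/60, 29/60, 0]) x / (1 / 3)) := by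
          rw [Fin.sum_univ_three]
          simp only [Matrix.cons_val_zero, Matrix.cons_val_one, Matrix.head_cons,
            Matrix.cons_val_two, Matrix.tail_cons]
          rw [e3, e4, e5]
  · rintro ⟨P, ⟨hPnn, _⟩, hPp, hPu⟩
    have hrow := congrFun hPu 0
    have hq0 := congrFun hPp 0
    simp only [stocApply, Fin.sum_univ_three, Matrix.cons_val_zero, Matrix.cons_val_one,
      Matrix.head_cons, Matrix.cons_val_two, Matrix.tail_cons] at hrow hq0
    have h00 := hPnn 0 0
    have h01 := hPnn 0 1
    have h02 := hPnn 0 2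
    linarith
end

section
/- Let ψ ∈ ℂ^n be a unit vector, σ1 := ψψ* (a pure state), σ0 an n×n density matrix, and p0, p1 probability vectors on a finite set X. A classical-to-quantum channel Γ with Γ(p0) = σ0 and Γ(p1) = σ1 exists if and only if the matrix σ0 − (Σ_{x : p1(x)>0} p0(x))·σ1 is positive semidefinite. -/
open Matrix
open scoped Kronecker ComplexOrder

namespace CQProofAux
variable {n : ℕ}

lemma smul_psd {c : ℝ} (hc : 0 ≤ c) {A : Matrix (Fin n) (Fin n) ℂ}
    (hA : A.PosSemidef) : ((c:ℂ) • A).PosSemidef := by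
  refine Matrix.PosSemidef.of_dotProduct_mulVec_nonneg ?_ ?_
  · have : star (c:ℂ) = (c:ℂ) := by simp
    rw [Matrix.IsHermitian, conjTranspose_smul, this, hA.1]
  · intro x
    rw [smul_mulVec, dotProduct_smul, smul_eq_mul]
    exact mul_nonneg (by exact_mod_cast hc) (hA.dotProduct_mulVec_nonneg x)

lemma sum_mulVec' {X : Type*} [Fintype X] (s : Finset X)
    (M : X → Matrix (Fin n) (Fin n) ℂ) (v : Fin n → ℂ) :
    (∑ x ∈ s, M x) *ᵥ v = ∑ x ∈ s, M x *ᵥ v := by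
  classical
  induction s using Finset.induction_on with
  | empty => simp
  | insert _ _ h ih => rw [Finset.sum_insert h, Finset.sum_insert h, add_mulVec, ih]

lemma sum_psd {X : Type*} [Fintype X] (s : Finset X)
    (M : X → Matrix (Fin n) (Fin n) ℂ) (h : ∀ x ∈ s, (M x).PosSemidef) :
    (∑ x ∈ s, M x).PosSemidef := by
  classical
  induction s using Finset.induction_on with
  | empty => simpa using Matrix.PosSemidef.zero
  | insert _ _ hx ih =>
      rw [Finset.sum_insert hx]
      exact ((h _ (Finset.mem_insert_self _ _)).add
        (ih fun x hxs => h x (Finset.mem_insert_of_mem hxs)))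

lemma vmv_mulVec (ψ v : Fin n → ℂ) :
    vecMulVec ψ (star ψ) *ᵥ v = (star ψ ⬝ᵥ v) • ψ := by
  funext i
  simp only [mulVec, dotProduct, vecMulVec_apply, Pi.smul_apply, smul_eq_mul,
    Pi.star_apply, Finset.sum_mul]
  exact Finset.sum_congr rfl fun j _ => by ring

lemma vmv_herm (ψ : Fin n → ℂ) : (vecMulVec ψ (star ψ)).IsHermitian := by
  ext i j
  simp [vecMulVec_apply, conjTranspose_apply, mul_comm]

lemma vmv_psd (ψ : Fin n → ℂ) : (vecMulVec ψ (star ψ)).PosSemidef := by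
  refine Matrix.PosSemidef.of_dotProduct_mulVec_nonneg (vmv_herm ψ) fun x => ?_
  rw [vmv_mulVec, dotProduct_smul, smul_eq_mul]
  have : star x ⬝ᵥ ψ = star (star ψ ⬝ᵥ x) := by rw [star_dotProduct]
  rw [mul_comm, this]
  exact star_mul_self_nonneg _

lemma vmv_trace (ψ : Fin n → ℂ) (hψ : star ψ ⬝ᵥ ψ = 1) :
    (vecMulVec ψ (star ψ)).trace = 1 := by
  rw [← hψ]
  simp only [trace, diag, vecMulVec_apply, dotProduct, Pi.star_apply]
  exact Finset.sum_congr rfl fun i _ => mul_comm _ _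

lemma eq_pure {ψ : Fin n → ℂ} (hψ : star ψ ⬝ᵥ ψ = 1)
    {ρ : Matrix (Fin n) (Fin n) ℂ} (hρ : ρ.PosSemidef) (htr : ρ.trace = 1)
    (h : ∀ w : Fin n → ℂ, star ψ ⬝ᵥ w = 0 → ρ *ᵥ w = 0) :
    ρ = vecMulVec ψ (star ψ) := by
  set u : Fin n → ℂ := ρ *ᵥ ψ with hu
  -- every vector decomposes; ρ v = ⟨ψ,v⟩ • u
  have key : ∀ v : Fin n → ℂ, ρ *ᵥ v = (star ψ ⬝ᵥ v) • u := by
    intro v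
    have hw : star ψ ⬝ᵥ (v - (star ψ ⬝ᵥ v) • ψ) = 0 := by
      rw [dotProduct_sub, dotProduct_smul, hψ, smul_eq_mul, mul_one, sub_self]
    have h0 := h _ hw
    rw [mulVec_sub, mulVec_smul, sub_eq_zero] at h0
    exact h0
  -- u is proportional to ψ
  set μ : ℂ := star ψ ⬝ᵥ u with hμ
  have huψ : u = μ • ψ := by
    set w : Fin n → ℂ := u - μ • ψ with hwdef
    have hw0 : star ψ ⬝ᵥ w = 0 := by
      rw [hwdef, dotProduct_sub, dotProduct_smul, hψ, smul_eq_mul, mul_one, hμ, sub_self]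
    have hρw : ρ *ᵥ w = 0 := h _ hw0
    have hwψ : star w ⬝ᵥ ψ = 0 := by
      rw [star_dotProduct, hw0, star_zero]
    have hwu : star w ⬝ᵥ u = 0 := by
      have hvm : star w ᵥ* ρ = star (ρᴴ *ᵥ w) := by
        rw [star_mulVec, conjTranspose_conjTranspose]
      rw [hu, dotProduct_mulVec, hvm, hρ.1.eq, hρw, star_zero, zero_dotProduct]
    have : star w ⬝ᵥ w = 0 := by
      rw [hwdef, dotProduct_sub, dotProduct_smul, hwu]
      show 0 - μ * (star w ⬝ᵥ ψ) = 0
      rw [hwψ, mul_zero, sub_zero]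
    have := dotProduct_star_self_eq_zero.mp this
    rw [hwdef, sub_eq_zero] at this
    exact this
  have hρeq : ρ = μ • vecMulVec ψ (star ψ) := by
    ext i j
    have h1 := congrFun (key (Pi.single j 1)) i
    have h2 : star ψ ⬝ᵥ Pi.single j 1 = star (ψ j) := by simp
    rw [mulVec_single] at h1
    simp only [Pi.smul_apply, MulOpposite.op_one, one_smul, col_apply] at h1
    rw [h1, h2, huψ]
    simp [vecMulVec_apply, smul_eq_mul]
    ring
  have hμ1 : μ = 1 := by
    have := htr
    rw [hρeq, trace_smul, vmv_trace ψ hψ, smul_eq_mul, mul_one] at this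
    exact this
  rw [hρeq, hμ1, one_smul]

lemma dotProduct_sum' {X : Type*} [Fintype X] (s : Finset X) (v : Fin n → ℂ)
    (f : X → Fin n → ℂ) : v ⬝ᵥ (∑ x ∈ s, f x) = ∑ x ∈ s, v ⬝ᵥ f x := by
  classical
  induction s using Finset.induction_on with
  | empty => simp
  | insert _ _ h ih => rw [Finset.sum_insert h, Finset.sum_insert h, dotProduct_add, ih]

lemma psd_trace_zero {A : Matrix (Fin n) (Fin n) ℂ} (hA : A.PosSemidef)
    (h : A.trace = 0) : A = 0 := by
  have hd : ∀ i, star (Pi.single i 1 : Fin n → ℂ) ⬝ᵥ A *ᵥ Pi.single i 1 = A i i := by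
    intro i
    rw [mulVec_single]
    simp [dotProduct, Pi.single_apply, apply_ite]
  have hsum : ∑ i, star (Pi.single i 1 : Fin n → ℂ) ⬝ᵥ A *ᵥ Pi.single i 1 = 0 := by
    rw [← h, trace]
    exact Finset.sum_congr rfl fun i _ => hd i
  have hz : ∀ i ∈ Finset.univ, star (Pi.single i 1 : Fin n → ℂ) ⬝ᵥ A *ᵥ Pi.single i 1 = 0 :=
    (Finset.sum_eq_zero_iff_of_nonneg fun i _ => hA.dotProduct_mulVec_nonneg _).mp hsum
  ext i j
  have := (hA.dotProduct_mulVec_zero_iff (Pi.single j 1)).mp (hz j (Finset.mem_univ j))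
  have := congrFun this i
  rw [mulVec_single] at this
  simpa using this

end CQProofAux

/-- For a pure target state `σ1 = ψψ*`, a classical-to-quantum
channel `Γ` with `Γ(p0) = σ0`, `Γ(p1) = σ1` exists iff
`σ0 − (Σ_{x : p1(x)>0} p0(x)) σ1` is positive semidefinite. -/
theorem cq_channel_exists_iff_posSemidef {n : ℕ} {X : Type*} [Fintype X]
    (ψ : Fin n → ℂ) (hψ : star ψ ⬝ᵥ ψ = 1)
    (σ0 : Matrix (Fin n) (Fin n) ℂ) (hσ0 : IsDensityMatrix σ0)
    (p0 p1 : X → ℝ) (hp0 : ProbVec p0) (hp1 : ProbVec p1) :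
    (∃ ρ : X → Matrix (Fin n) (Fin n) ℂ, (∀ x, IsDensityMatrix (ρ x)) ∧
        cqApply ρ p0 = σ0 ∧ cqApply ρ p1 = vecMulVec ψ (star ψ)) ↔
      (σ0 - ((∑ x, if 0 < p1 x then p0 x else 0 : ℝ) : ℂ) •
        vecMulVec ψ (star ψ)).PosSemidef := by
  classical
  set σ1 : Matrix (Fin n) (Fin n) ℂ := vecMulVec ψ (star ψ) with hσ1def
  set c : ℝ := ∑ x, if 0 < p1 x then p0 x else 0 with hcdef
  constructor
  · rintro ⟨ρ, hρ, h0, h1⟩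
    have hkey : ∀ x, 0 < p1 x → ρ x = σ1 := by
      intro x0 hx0
      refine CQProofAux.eq_pure hψ (hρ x0).1 (hρ x0).2 fun w hw => ?_
      have hσw : σ1 *ᵥ w = 0 := by rw [hσ1def, CQProofAux.vmv_mulVec, hw, zero_smul]
      have hsum : ∑ x, (p1 x : ℂ) * (star w ⬝ᵥ ρ x *ᵥ w) = 0 := by
        have hq := congrArg (fun M => star w ⬝ᵥ M *ᵥ w) h1
        simp only [cqApply] at hq
        rw [hσw, dotProduct_zero, CQProofAux.sum_mulVec'] at hq
        rw [← hq, CQProofAux.dotProduct_sum']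
        exact Finset.sum_congr rfl fun x _ => by
          rw [smul_mulVec, dotProduct_smul, smul_eq_mul]
      have hz := (Finset.sum_eq_zero_iff_of_nonneg fun x _ =>
        mul_nonneg (by exact_mod_cast hp1.1 x) ((hρ x).1.dotProduct_mulVec_nonneg w)).mp hsum x0
        (Finset.mem_univ x0)
      have hne : (p1 x0 : ℂ) ≠ 0 := by exact_mod_cast ne_of_gt hx0
      have hq0 : star w ⬝ᵥ ρ x0 *ᵥ w = 0 := by
        rcases mul_eq_zero.mp hz with h | h
        · exact absurd h hne
        · exact h
      exact ((hρ x0).1.dotProduct_mulVec_zero_iff w).mp hq0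
    have hrepr : σ0 - (c : ℂ) • σ1 =
        ∑ x, ((if 0 < p1 x then 0 else p0 x : ℝ) : ℂ) • ρ x := by
      have hc1 : (c : ℂ) • σ1 = ∑ x, (if 0 < p1 x then (p0 x : ℂ) else 0) • ρ x := by
        rw [hcdef, Complex.ofReal_sum, Finset.sum_smul]
        refine Finset.sum_congr rfl fun x _ => ?_
        split_ifs with h
        · rw [hkey x h]
        · simp
      rw [← h0, cqApply, hc1, ← Finset.sum_sub_distrib]
      refine Finset.sum_congr rfl fun x _ => ?_
      split_ifs with h <;> simp
    rw [hrepr]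
    refine CQProofAux.sum_psd _ _ fun x _ => ?_
    split_ifs with h
    · simpa using Matrix.PosSemidef.zero
    · exact CQProofAux.smul_psd (hp0.1 x) (hρ x).1
  · intro hA
    set A : Matrix (Fin n) (Fin n) ℂ := σ0 - (c : ℂ) • σ1 with hAdef
    have hσ1psd : σ1.PosSemidef := CQProofAux.vmv_psd ψ
    have hσ1tr : σ1.trace = 1 := CQProofAux.vmv_trace ψ hψ
    have hc0 : 0 ≤ c := Finset.sum_nonneg fun x _ => by
      split_ifs; exacts [hp0.1 x, le_refl 0]
    have hc1 : c ≤ 1 := by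
      rw [hcdef, ← hp0.2]
      exact Finset.sum_le_sum fun x _ => by
        split_ifs; exacts [le_refl _, hp0.1 x]
    have htrA : A.trace = ((1 - c : ℝ) : ℂ) := by
      rw [hAdef, trace_sub, trace_smul, hσ0.2, hσ1tr, smul_eq_mul, mul_one]
      push_cast; ring
    -- the auxiliary density matrix
    set ρ' : Matrix (Fin n) (Fin n) ℂ :=
      if c = 1 then σ1 else (((1 - c)⁻¹ : ℝ) : ℂ) • A with hρ'def
    have hρ'd : IsDensityMatrix ρ' := by
      rw [hρ'def]
      split_ifs with h
      · exact ⟨hσ1psd, hσ1tr⟩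
      · have hpos : (0:ℝ) < 1 - c := by
          have := lt_of_le_of_ne hc1 h
          linarith
        refine ⟨CQProofAux.smul_psd (inv_nonneg.mpr hpos.le) hA, ?_⟩
        rw [trace_smul, htrA, smul_eq_mul, ← Complex.ofReal_mul,
          inv_mul_cancel₀ (ne_of_gt hpos), Complex.ofReal_one]
    refine ⟨fun x => if 0 < p1 x then σ1 else ρ', fun x => ?_, ?_, ?_⟩
    · dsimp only
      split_ifs with h
      · exact ⟨hσ1psd, hσ1tr⟩
      · exact hρ'd
    · -- cqApply _ p0 = σ0
      have hsplit : cqApply (fun x => if 0 < p1 x then σ1 else ρ') p0 =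
          (∑ x, if 0 < p1 x then (p0 x : ℂ) else 0) • σ1 +
          (∑ x, if 0 < p1 x then 0 else (p0 x : ℂ)) • ρ' := by
        rw [cqApply, Finset.sum_smul, Finset.sum_smul, ← Finset.sum_add_distrib]
        refine Finset.sum_congr rfl fun x _ => ?_
        split_ifs with h <;> simp
      have hcc : (∑ x, if 0 < p1 x then (p0 x : ℂ) else 0) = (c : ℂ) := by
        rw [hcdef, Complex.ofReal_sum]
        exact Finset.sum_congr rfl fun x _ => by split_ifs <;> simp
      have hss : (∑ x, if 0 < p1 x then 0 else (p0 x : ℂ)) = ((1 - c : ℝ) : ℂ) := by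
        have : c + (∑ x, if 0 < p1 x then 0 else p0 x) = 1 := by
          rw [hcdef, ← Finset.sum_add_distrib, ← hp0.2]
          exact Finset.sum_congr rfl fun x _ => by split_ifs <;> ring
        have h2 : (∑ x, if 0 < p1 x then 0 else p0 x) = 1 - c := by linarith
        rw [← h2, Complex.ofReal_sum]
        exact Finset.sum_congr rfl fun x _ => by split_ifs <;> simp
      rw [hsplit, hcc, hss, hρ'def]
      split_ifs with h
      · -- c = 1 : A is PSD with trace 0, hence 0, so σ0 = σ1
        have hA0 : A = 0 := CQProofAux.psd_trace_zero hA (by rw [htrA, h]; simp)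
        have hσ0σ1 : σ0 = σ1 := by
          have := hA0
          rw [hAdef, sub_eq_zero] at this
          rw [this, h]
          simp
        rw [hσ0σ1, h]
        push_cast
        simp
      · rw [smul_smul, ← Complex.ofReal_mul, mul_inv_cancel₀ (by
          intro hz
          apply h
          linarith [sub_eq_zero.mp hz]), Complex.ofReal_one, one_smul, hAdef]
        abel
    · -- cqApply _ p1 = σ1
      have : cqApply (fun x => if 0 < p1 x then σ1 else ρ') p1 =
          ∑ x, (p1 x : ℂ) • σ1 := by
        rw [cqApply]
        refine Finset.sum_congr rfl fun x _ => ?_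
        split_ifs with h
        · rfl
        · have hx : p1 x = 0 := le_antisymm (not_lt.mp h) (hp1.1 x)
          rw [hx]
          simp
      rw [this, ← Finset.sum_smul, ← Complex.ofReal_sum, hp1.2,
        Complex.ofReal_one, one_smul]
end
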